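/- arXiv:1909.09501 — 7 statements merged into one kernel-verified Lean document; each statement's English description precedes it below -/
import Mathlib

section
/- Let A and B be n×n complex matrices such that every eigenvalue μ of A satisfies |Im μ| < π, and likewise every eigenvalue of B satisfies |Im μ| < π. If exp(A) = exp(B), then A = B. In other words, the matrix exponential is injective on the set U = {A : for all eigenvalues λ of A, |Im λ| < π}. -/
open NormedSpace

set_option linter.unusedSectionVars false
set_option maxRecDepth 8000

section Aux

variable {E : Type*} [NormedAddCommGroup E] [NormedSpace ℂ E] [CompleteSpace E]

noncomputable instance clmNormedAlgebraRat : NormedAlgebra ℚ (E →L[ℂ] E) :=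
  NormedAlgebra.restrictScalars ℚ ℂ (E →L[ℂ] E)

/-- Injectivity of `Complex.exp` on the strip `|Im| < π`. -/
lemma strip_exp_injective {μ ν : ℂ} (hμ : |μ.im| < Real.pi) (hν : |ν.im| < Real.pi)
    (h : Complex.exp μ = Complex.exp ν) : μ = ν := by
  obtain ⟨k, hk⟩ := Complex.exp_eq_exp_iff_exists_int.mp h
  have him : μ.im = ν.im + (k : ℝ) * (2 * Real.pi) := by
    have := congrArg Complex.im hk
    simpa [Complex.add_im, Complex.mul_im, Complex.mul_re] using this
  have hπ : (0:ℝ) < Real.pi := Real.pi_pos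
  have habs : |(k : ℝ)| * (2 * Real.pi) < 2 * Real.pi := by
    have : |(k : ℝ) * (2 * Real.pi)| < 2 * Real.pi := by
      rw [abs_lt] at hμ hν ⊢
      constructor <;> nlinarith [him]
    rwa [abs_mul, abs_of_pos (by positivity : (0:ℝ) < 2 * Real.pi)] at this
  have hk0 : k = 0 := by
    by_contra hk0
    have : (1:ℝ) ≤ |(k:ℝ)| := by
      rcases lt_or_ge 0 (|(k:ℝ)|) with h1 | h1
      · exact_mod_cast Int.one_le_abs (by exact_mod_cast hk0)
      · simp at h1; exact absurd (by exact_mod_cast h1) hk0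
    nlinarith
  rw [hk0] at hk; simpa using hk

lemma exp_clm_apply (T : E →L[ℂ] E) (x : E) :
    exp T x = ∑' k : ℕ, (k.factorial : ℂ)⁻¹ • (T ^ k) x := by
  have hs : Summable (fun k : ℕ => ((k.factorial : ℂ))⁻¹ • T ^ k) :=
    expSeries_summable' (𝕂 := ℂ) T
  have := (ContinuousLinearMap.apply ℂ E x).map_tsum hs
  rw [exp_eq_tsum ℂ]
  simpa using this

lemma exp_split (T : E →L[ℂ] E) (μ : ℂ) :
    exp T = Complex.exp μ • exp (T - μ • 1) := by
  have hcomm : Commute ((μ • 1 : E →L[ℂ] E)) (T - μ • 1) := (Commute.one_left _).smul_left μ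
  have hsc : exp ((μ • 1 : E →L[ℂ] E)) = Complex.exp μ • 1 := by
    have h1 : (μ • 1 : E →L[ℂ] E) = algebraMap ℂ _ μ := by
      simp [Algebra.algebraMap_eq_smul_one]
    rw [h1, ← map_exp (algebraMap ℂ (E →L[ℂ] E)) (continuous_algebraMap ℂ _),
      ← Complex.exp_eq_exp_ℂ, Algebra.algebraMap_eq_smul_one]
  calc exp T = exp (μ • 1 + (T - μ • 1)) := by rw [add_sub_cancel]
    _ = exp ((μ • 1 : E →L[ℂ] E)) * exp (T - μ • 1) := exp_add_of_commute hcomm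
    _ = Complex.exp μ • exp (T - μ • 1) := by rw [hsc, smul_mul_assoc, one_mul]

lemma exp_apply_of_pow_eq_zero {T : E →L[ℂ] E} {μ : ℂ} {d : ℕ} {x : E}
    (hx : (((T - μ • 1) : E →L[ℂ] E) ^ d) x = 0) :
    exp T x = Complex.exp μ •
      ∑ k ∈ Finset.range d, (k.factorial : ℂ)⁻¹ • ((T - μ • 1) ^ k) x := by
  rw [exp_split T μ, ContinuousLinearMap.smul_apply]
  congr 1
  rw [exp_clm_apply]
  refine tsum_eq_sum ?_
  intro k hk
  have hk' : d ≤ k := by simpa using hk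
  have hzero : ((T - μ • 1) ^ k) x = 0 := by
    have hsplit : (T - μ • 1) ^ k = (T - μ • 1) ^ (k - d) * (T - μ • 1) ^ d := by
      rw [← pow_add]; congr 1; omega
    rw [hsplit, ContinuousLinearMap.mul_apply, hx, map_zero]
  simp [hzero]


lemma exp_sub_one_apply (N : E →L[ℂ] E) (j : ℕ) (x : E) (hx : (N ^ (j + 1)) x = 0) :
    (N ^ j) ((exp N - 1) x) = 0 := by
  have h0 : exp N x = ∑ k ∈ Finset.range (j + 1), (k.factorial : ℂ)⁻¹ • (N ^ k) x := by
    have := exp_apply_of_pow_eq_zero (T := N) (μ := 0) (d := j + 1) (x := x) (by simpa using hx)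
    simpa using this
  rw [ContinuousLinearMap.sub_apply, ContinuousLinearMap.one_apply, map_sub, h0, map_sum]
  have hterm : ∀ k ∈ Finset.range (j + 1),
      (N ^ j) ((k.factorial : ℂ)⁻¹ • (N ^ k) x) = if k = 0 then (N ^ j) x else 0 := by
    intro k _
    rcases Nat.eq_zero_or_pos k with rfl | hkpos
    · simp
    · have hz : (N ^ j) ((N ^ k) x) = 0 := by
        have hjk : N ^ j * N ^ k = N ^ (j + k - (j + 1)) * N ^ (j + 1) := by
          rw [← pow_add, ← pow_add]; congr 1; omega
        have := congrArg (fun g : E →L[ℂ] E => g x) hjk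
        simpa [ContinuousLinearMap.mul_apply, hx] using this
      rw [map_smul, hz, smul_zero, if_neg (by omega)]
  rw [Finset.sum_congr rfl hterm, Finset.sum_ite_eq' (Finset.range (j + 1)) 0 (fun _ => (N ^ j) x)]
  simp

lemma exp_sub_one_pow_apply (N : E →L[ℂ] E) :
    ∀ (j : ℕ) (x : E), (N ^ j) x = 0 → ((exp N - 1) ^ j) x = 0 := by
  intro j
  induction j with
  | zero => intro x hx; simpa using hx
  | succ j ih =>
    intro x hx
    rw [pow_succ, ContinuousLinearMap.mul_apply]
    exact ih _ (exp_sub_one_apply N j x hx)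

lemma exp_sub_scalar_pow_apply (T : E →L[ℂ] E) (μ : ℂ) (d : ℕ) (x : E)
    (hx : ((T - μ • 1) ^ d) x = 0) :
    ((exp T - Complex.exp μ • 1) ^ d) x = 0 := by
  have hfac : exp T - Complex.exp μ • 1 = Complex.exp μ • (exp (T - μ • 1) - 1) := by
    rw [smul_sub, ← exp_split]
  rw [hfac, smul_pow, ContinuousLinearMap.smul_apply, exp_sub_one_pow_apply _ d x hx, smul_zero]

lemma clm_end_pow_apply (f : E →L[ℂ] E) (k : ℕ) (x : E) :
    ((f : E →ₗ[ℂ] E) ^ k) x = (f ^ k) x := by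
  induction k generalizing x with
  | zero => simp
  | succ k ih =>
    rw [pow_succ, pow_succ, Module.End.mul_apply, ContinuousLinearMap.mul_apply]
    exact ih _

lemma end_sub_pow_apply (f : E →L[ℂ] E) (μ : ℂ) (k : ℕ) (x : E) :
    (((f : E →ₗ[ℂ] E) - μ • 1) ^ k) x = (((f - μ • 1) : E →L[ℂ] E) ^ k) x := by
  have h1 : ((f : E →ₗ[ℂ] E) - μ • 1) = (((f - μ • 1) : E →L[ℂ] E) : E →ₗ[ℂ] E) := by
    ext z; simp
  rw [h1, clm_end_pow_apply]

/-- Generalized eigenspaces map into generalized eigenspaces of the exponential. -/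
lemma maxGen_le_exp (T : E →L[ℂ] E) (μ : ℂ) :
    Module.End.maxGenEigenspace (T : E →ₗ[ℂ] E) μ ≤
      Module.End.maxGenEigenspace ((exp T : E →L[ℂ] E) : E →ₗ[ℂ] E) (Complex.exp μ) := by
  intro x hx
  rw [Module.End.mem_maxGenEigenspace] at hx ⊢
  obtain ⟨k, hk⟩ := hx
  refine ⟨k, ?_⟩
  rw [end_sub_pow_apply] at hk ⊢
  exact exp_sub_scalar_pow_apply T μ k x hk


lemma mem_spectrum_of_maxGen_ne_bot {T : E →L[ℂ] E} {μ : ℂ}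
    (h : Module.End.maxGenEigenspace (T : E →ₗ[ℂ] E) μ ≠ ⊥) :
    μ ∈ spectrum ℂ T := by
  -- first, μ is an eigenvalue of ↑T
  obtain ⟨x, hx, hx0⟩ := Submodule.exists_mem_ne_zero_of_ne_bot h
  rw [Module.End.mem_maxGenEigenspace] at hx
  obtain ⟨k, hk⟩ := hx
  have hgen : Module.End.HasGenEigenvalue (T : E →ₗ[ℂ] E) μ k := by
    rw [Module.End.HasGenEigenvalue]
    intro hbot
    have : x ∈ Module.End.genEigenspace (T : E →ₗ[ℂ] E) μ k := by
      rw [Module.End.mem_genEigenspace_nat, LinearMap.mem_ker]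
      exact hk
    rw [hbot] at this
    exact hx0 (by simpa using this)
  have heig : Module.End.HasEigenvalue (T : E →ₗ[ℂ] E) μ :=
    Module.End.hasEigenvalue_of_hasGenEigenvalue hgen
  obtain ⟨v, hv⟩ := heig.exists_hasEigenvector
  have hv1 : T v = μ • v := Module.End.mem_eigenspace_iff.mp hv.1
  rw [spectrum.mem_iff]
  intro hu
  obtain ⟨u, hu⟩ := hu
  have h1 : (algebraMap ℂ (E →L[ℂ] E) μ - T) v = 0 := by
    rw [ContinuousLinearMap.sub_apply, Algebra.algebraMap_eq_smul_one,
      ContinuousLinearMap.smul_apply, ContinuousLinearMap.one_apply, hv1, sub_self]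
  have h2 : v = 0 := by
    have := congrArg (fun g : E →L[ℂ] E => g v) u.inv_mul
    simp only [ContinuousLinearMap.mul_apply, ContinuousLinearMap.one_apply, hu, h1,
      map_zero] at this
    exact this.symm
  exact hv.2 h2

/-- Sandwich lemma in a modular lattice. -/
lemma eq_of_le_of_iSup_eq_top {α ι : Type*} [CompleteLattice α] [IsModularLattice α]
    {W W' : ι → α} (hle : ∀ i, W' i ≤ W i) (hindep : iSupIndep W)
    (htop : ⨆ i, W' i = ⊤) (i : ι) : W i = W' i := by
  have hsup : W' i ⊔ (⨆ j, ⨆ (_ : j ≠ i), W' j) = ⊤ := by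
    rw [← top_le_iff, ← htop]
    refine iSup_le fun j => ?_
    by_cases hj : j = i
    · subst hj; exact le_sup_left
    · exact le_sup_of_le_right (le_iSup_of_le j (le_iSup_of_le hj le_rfl))
  have hdisj : W i ⊓ (⨆ j, ⨆ (_ : j ≠ i), W' j) = ⊥ := by
    rw [← le_bot_iff]
    refine le_trans (inf_le_inf_left _ ?_) (hindep i).le_bot
    exact iSup_mono fun j => iSup_mono' fun hj => ⟨hj, hle j⟩
  calc W i = (W' i ⊔ ⨆ j, ⨆ (_ : j ≠ i), W' j) ⊓ W i := by rw [hsup, top_inf_eq]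
    _ = W' i ⊔ ((⨆ j, ⨆ (_ : j ≠ i), W' j) ⊓ W i) := sup_inf_assoc_of_le _ (hle i)
    _ = W' i := by rw [inf_comm, hdisj, sup_bot_eq]

/-- Vector-coefficient polynomial vanishing at all naturals has zero coefficients. -/
lemma coeff_zero_of_forall_nat_sum_eq_zero {V : Type*} [AddCommGroup V] [Module ℂ V]
    (d : ℕ) (c : ℕ → V) (h : ∀ m : ℕ, ∑ k ∈ Finset.range d, ((m : ℂ) ^ k) • c k = 0) :
    ∀ k < d, c k = 0 := by
  intro k hk
  rw [← Module.forall_dual_apply_eq_zero_iff ℂ]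
  intro φ
  set p : Polynomial ℂ := ∑ j ∈ Finset.range d, Polynomial.C (φ (c j)) * Polynomial.X ^ j with hp
  have hroot : ∀ m : ℕ, p.eval ((m : ℂ)) = 0 := by
    intro m
    have := congrArg φ (h m)
    rw [hp, Polynomial.eval_finset_sum]
    simp only [Polynomial.eval_mul, Polynomial.eval_C, Polynomial.eval_pow, Polynomial.eval_X]
    rw [map_sum] at this
    simp only [map_smul, smul_eq_mul, map_zero] at this
    rw [← this]
    exact Finset.sum_congr rfl (fun j _ => mul_comm _ _)
  have hp0 : p = 0 := by
    refine Polynomial.eq_zero_of_infinite_isRoot p ?_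
    exact Set.infinite_of_injective_forall_mem (f := fun m : ℕ => (m : ℂ))
      Nat.cast_injective (fun m => hroot m)
  have := congrArg (fun q : Polynomial ℂ => q.coeff k) hp0
  simp only [hp, Polynomial.finset_sum_coeff, Polynomial.coeff_C_mul, Polynomial.coeff_X_pow,
    Polynomial.coeff_zero, mul_ite, mul_one, mul_zero] at this
  rwa [Finset.sum_ite_eq (Finset.range d) k (fun j => φ (c j)),
    if_pos (Finset.mem_range.mpr hk)] at this


/-- Injectivity of the exponential on continuous linear endomorphisms with spectrum in the
horizontal strip `|Im| < π`. -/
theorem clm_exp_injective [FiniteDimensional ℂ E] (T S : E →L[ℂ] E)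
    (hT : ∀ μ ∈ spectrum ℂ T, |μ.im| < Real.pi)
    (hS : ∀ μ ∈ spectrum ℂ S, |μ.im| < Real.pi)
    (h : exp T = exp S) : T = S := by
  have main : ∀ (μ : ℂ), Module.End.maxGenEigenspace (T : E →ₗ[ℂ] E) μ ≤
      LinearMap.ker ((T : E →ₗ[ℂ] E) - (S : E →ₗ[ℂ] E)) := by
    intro μ x hx
    by_cases hbot : Module.End.maxGenEigenspace (T : E →ₗ[ℂ] E) μ = ⊥
    · rw [hbot, Submodule.mem_bot] at hx
      simp [LinearMap.mem_ker, hx]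
    · have hμT : μ ∈ spectrum ℂ T := mem_spectrum_of_maxGen_ne_bot hbot
      have hμs : |μ.im| < Real.pi := hT μ hμT
      -- x belongs to the corresponding generalized eigenspace of S
      set W : ℂ → Submodule ℂ E := fun l =>
        Module.End.maxGenEigenspace ((exp S : E →L[ℂ] E) : E →ₗ[ℂ] E) l with hW
      set W' : ℂ → Submodule ℂ E := fun l =>
        ⨆ (ν : ℂ) (_ : Complex.exp ν = l), Module.End.maxGenEigenspace (S : E →ₗ[ℂ] E) ν with hW'
      have hle : ∀ l, W' l ≤ W l := by
        intro l
        refine iSup_le fun ν => iSup_le fun hν => ?_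
        rw [hW, ← hν]
        exact maxGen_le_exp S ν
      have htop' : ⨆ l, W' l = ⊤ := by
        refine le_antisymm le_top ?_
        rw [← Module.End.iSup_maxGenEigenspace_eq_top (S : E →ₗ[ℂ] E)]
        refine iSup_le fun ν => ?_
        refine le_iSup_of_le (Complex.exp ν) ?_
        rw [hW']
        exact le_iSup_of_le ν (le_iSup_of_le rfl le_rfl)
      have hindep : iSupIndep W :=
        Module.End.independent_maxGenEigenspace _
      have hWW' := eq_of_le_of_iSup_eq_top hle hindep htop'
      have hxW : x ∈ W (Complex.exp μ) := by
        have hmem := maxGen_le_exp T μ hx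
        rw [h] at hmem
        exact hmem
      rw [hWW'] at hxW
      have hW'le : W' (Complex.exp μ) ≤ Module.End.maxGenEigenspace (S : E →ₗ[ℂ] E) μ := by
        refine iSup_le fun ν => iSup_le fun hν => ?_
        by_cases hb : Module.End.maxGenEigenspace (S : E →ₗ[ℂ] E) ν = ⊥
        · rw [hb]; exact bot_le
        · have hνS : ν ∈ spectrum ℂ S := mem_spectrum_of_maxGen_ne_bot hb
          have : ν = μ := strip_exp_injective (hS ν hνS) hμs hν
          rw [this]
      have hxS : x ∈ Module.End.maxGenEigenspace (S : E →ₗ[ℂ] E) μ := hW'le hxW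
      -- the polynomial argument
      rw [Module.End.mem_maxGenEigenspace] at hx hxS
      obtain ⟨k₁, hk₁⟩ := hx
      obtain ⟨k₂, hk₂⟩ := hxS
      set d : ℕ := k₁ + k₂ + 2 with hd
      rw [end_sub_pow_apply] at hk₁ hk₂
      have hk₁' : ((T - μ • 1) ^ d) x = 0 := by
        have : (T - μ • 1) ^ d = (T - μ • 1) ^ (d - k₁) * (T - μ • 1) ^ k₁ := by
          rw [← pow_add]; congr 1; omega
        rw [this, ContinuousLinearMap.mul_apply, hk₁, map_zero]
      have hk₂' : ((S - μ • 1) ^ d) x = 0 := by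
        have : (S - μ • 1) ^ d = (S - μ • 1) ^ (d - k₂) * (S - μ • 1) ^ k₂ := by
          rw [← pow_add]; congr 1; omega
        rw [this, ContinuousLinearMap.mul_apply, hk₂, map_zero]
      set c : ℕ → E := fun k =>
        (k.factorial : ℂ)⁻¹ • (((T - μ • 1) ^ k) x - ((S - μ • 1) ^ k) x) with hc
      have hpoly : ∀ m : ℕ, ∑ k ∈ Finset.range d, ((m : ℂ) ^ k) • c k = 0 := by
        intro m
        have hmT : (((m : ℂ) • T - ((m : ℂ) * μ) • 1) : E →L[ℂ] E)
            = (m : ℂ) • (T - μ • 1) := by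
          rw [smul_sub, mul_smul]
        have hmS : (((m : ℂ) • S - ((m : ℂ) * μ) • 1) : E →L[ℂ] E)
            = (m : ℂ) • (S - μ • 1) := by
          rw [smul_sub, mul_smul]
        have hxT : ((((m : ℂ) • T - ((m : ℂ) * μ) • 1) : E →L[ℂ] E) ^ d) x = 0 := by
          rw [hmT, smul_pow, ContinuousLinearMap.smul_apply, hk₁', smul_zero]
        have hxS' : ((((m : ℂ) • S - ((m : ℂ) * μ) • 1) : E →L[ℂ] E) ^ d) x = 0 := by
          rw [hmS, smul_pow, ContinuousLinearMap.smul_apply, hk₂', smul_zero]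
        have heT := exp_apply_of_pow_eq_zero hxT
        have heS := exp_apply_of_pow_eq_zero hxS'
        have hexpm : exp ((m : ℂ) • T) = exp ((m : ℂ) • S) := by
          rw [Nat.cast_smul_eq_nsmul ℂ m T, Nat.cast_smul_eq_nsmul ℂ m S,
            exp_nsmul, exp_nsmul, h]
        have hsum : ∑ k ∈ Finset.range d,
              (k.factorial : ℂ)⁻¹ • ((((m : ℂ) • T - ((m : ℂ) * μ) • 1) : E →L[ℂ] E) ^ k) x
            = ∑ k ∈ Finset.range d,
              (k.factorial : ℂ)⁻¹ • ((((m : ℂ) • S - ((m : ℂ) * μ) • 1) : E →L[ℂ] E) ^ k) x := by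
          have heq : Complex.exp ((m : ℂ) * μ) • ∑ k ∈ Finset.range d,
                (k.factorial : ℂ)⁻¹ • ((((m : ℂ) • T - ((m : ℂ) * μ) • 1) : E →L[ℂ] E) ^ k) x
              = Complex.exp ((m : ℂ) * μ) • ∑ k ∈ Finset.range d,
                (k.factorial : ℂ)⁻¹ • ((((m : ℂ) • S - ((m : ℂ) * μ) • 1) : E →L[ℂ] E) ^ k) x := by
            rw [← heT, ← heS, hexpm]
          exact smul_right_injective E (Complex.exp_ne_zero _) heq
        have hterm : ∀ k ∈ Finset.range d, ((m : ℂ) ^ k) • c k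
            = (k.factorial : ℂ)⁻¹ • ((((m : ℂ) • T - ((m : ℂ) * μ) • 1) : E →L[ℂ] E) ^ k) x
              - (k.factorial : ℂ)⁻¹ • ((((m : ℂ) • S - ((m : ℂ) * μ) • 1) : E →L[ℂ] E) ^ k) x := by
          intro k _
          rw [hmT, hmS, smul_pow, smul_pow, ContinuousLinearMap.smul_apply,
            ContinuousLinearMap.smul_apply, hc]
          rw [smul_comm, smul_sub, smul_sub]
        rw [Finset.sum_congr rfl hterm, Finset.sum_sub_distrib, hsum, sub_self]
      have hc1 : c 1 = 0 := coeff_zero_of_forall_nat_sum_eq_zero d c hpoly 1 (by omega)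
      rw [hc] at hc1
      simp only [pow_one, Nat.factorial_one, Nat.cast_one, inv_one, one_smul] at hc1
      have : T x = S x := by
        have h1 := sub_eq_zero.mp hc1
        simp only [ContinuousLinearMap.sub_apply, ContinuousLinearMap.smul_apply,
          ContinuousLinearMap.one_apply] at h1
        have := congrArg (fun y => y + μ • x) h1
        simpa [sub_add_cancel] using this
      simp [LinearMap.mem_ker, this]
  have htople : (⊤ : Submodule ℂ E) ≤
      LinearMap.ker ((T : E →ₗ[ℂ] E) - (S : E →ₗ[ℂ] E)) := by
    rw [← Module.End.iSup_maxGenEigenspace_eq_top (T : E →ₗ[ℂ] E)]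
    exact iSup_le main
  ext x
  have hx := htople (Submodule.mem_top (x := x))
  rw [LinearMap.mem_ker, LinearMap.sub_apply] at hx
  exact sub_eq_zero.mp hx


end Aux


/-- The matrix exponential is injective on the set of complex matrices all of whose
eigenvalues have imaginary part of absolute value less than `π`. -/
theorem matrix_exp_injective_of_spectrum_im_lt_pi {n : ℕ}
    (A B : Matrix (Fin n) (Fin n) ℂ)
    (hA : ∀ μ ∈ spectrum ℂ A, |μ.im| < Real.pi)
    (hB : ∀ μ ∈ spectrum ℂ B, |μ.im| < Real.pi)
    (h : NormedSpace.exp A = NormedSpace.exp B) :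
    A = B := by
  set E := EuclideanSpace ℂ (Fin n)
  set Φ := Matrix.toEuclideanCLM (n := Fin n) (𝕜 := ℂ) with hΦ
  have hcont : Continuous Φ := by
    let Φl : Matrix (Fin n) (Fin n) ℂ →ₗ[ℂ] (E →L[ℂ] E) :=
      { toFun := Φ, map_add' := fun x y => map_add Φ x y,
        map_smul' := fun c x => map_smul Φ c x }
    exact Φl.continuous_of_finiteDimensional
  have hexp : ∀ M : Matrix (Fin n) (Fin n) ℂ, Φ (exp M) = exp (Φ M) := by
    letI : NormedRing (Matrix (Fin n) (Fin n) ℂ) := Matrix.linftyOpNormedRing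
    letI : NormedAlgebra ℂ (Matrix (Fin n) (Fin n) ℂ) := Matrix.linftyOpNormedAlgebra
    haveI : CompleteSpace (Matrix (Fin n) (Fin n) ℂ) := FiniteDimensional.complete ℂ _
    letI : NormedAlgebra ℚ (Matrix (Fin n) (Fin n) ℂ) :=
      NormedAlgebra.restrictScalars ℚ ℂ (Matrix (Fin n) (Fin n) ℂ)
    intro M
    exact map_exp Φ hcont M
  have hspec : ∀ M : Matrix (Fin n) (Fin n) ℂ, spectrum ℂ (Φ M) = spectrum ℂ M := fun M =>
    AlgEquiv.spectrum_eq Φ M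
  have hmain : Φ A = Φ B := by
    refine clm_exp_injective (Φ A) (Φ B) ?_ ?_ ?_
    · rw [hspec]; exact hA
    · rw [hspec]; exact hB
    · rw [← hexp, ← hexp, h]
  exact Φ.injective hmain
end

section
/- Let A, E, F be n×n real matrices, and let D_X denote the Fréchet derivative of the matrix exponential at the matrix X (a linear map on n×n matrices). Then the adjoint of D_A with respect to the Frobenius (trace) inner product is D_{Aᵀ}; that is, trace((D_A(E))ᵀ F) = trace(Eᵀ D_{Aᵀ}(F)) for all E, F. -/
open Matrix

attribute [local instance] Matrix.linftyOpNormedRing Matrix.linftyOpNormedAlgebra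

section Aux

attribute [-instance] instTopologicalSpaceMatrix
attribute [-instance] Matrix.instUniformSpace

variable {n : ℕ}

local notation "M" => Matrix (Fin n) (Fin n) ℝ

/-- The trace as a continuous linear map. -/
noncomputable def traceCLM (n : ℕ) : Matrix (Fin n) (Fin n) ℝ →L[ℝ] ℝ :=
  LinearMap.toContinuousLinearMap (Matrix.traceLinearMap (Fin n) ℝ ℝ)

@[simp] lemma traceCLM_apply (X : M) : traceCLM n X = X.trace := rfl

/-- The bilinear form `(X, H) ↦ trace (X * H)` as a continuous bilinear map. -/
noncomputable def traceMulCLM (n : ℕ) :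
    Matrix (Fin n) (Fin n) ℝ →L[ℝ] Matrix (Fin n) (Fin n) ℝ →L[ℝ] ℝ :=
  (ContinuousLinearMap.compL ℝ (Matrix (Fin n) (Fin n) ℝ) (Matrix (Fin n) (Fin n) ℝ) ℝ
    (traceCLM n)).comp (ContinuousLinearMap.mul ℝ (Matrix (Fin n) (Fin n) ℝ))

@[simp] lemma traceMulCLM_apply (X H : M) : traceMulCLM n X H = (X * H).trace := rfl

lemma norm_one_le : ‖(1 : M)‖ ≤ 1 := by
  rw [← Matrix.diagonal_one, Matrix.linfty_opNorm_diagonal]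
  refine (pi_norm_le_iff_of_nonneg zero_le_one).2 fun i => ?_
  exact norm_one.le

lemma norm_pow_le_of_le {Y : M} {R : ℝ} (hY : ‖Y‖ ≤ R) (m : ℕ) : ‖Y ^ m‖ ≤ R ^ m := by
  cases m with
  | zero => rw [pow_zero, pow_zero]; exact norm_one_le
  | succ m =>
      calc ‖Y ^ (m + 1)‖ ≤ ‖Y‖ ^ (m + 1) := norm_pow_le' Y m.succ_pos
        _ ≤ R ^ (m + 1) := pow_le_pow_left₀ (norm_nonneg Y) hY _

lemma hasFDerivAt_pow_matrix (k : ℕ) (X : M) :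
    HasFDerivAt (fun Y : M => Y ^ k)
      (∑ i ∈ Finset.range k,
        ContinuousLinearMap.mulLeftRight ℝ M (X ^ i) (X ^ (k - 1 - i))) X := by
  induction k with
  | zero => simpa using hasFDerivAt_const (1 : M) X
  | succ k ih =>
      have h := ih.mul' (hasFDerivAt_id X)
      have e : ((fun Y : M => Y ^ k) * id) = fun Y : M => Y ^ (k + 1) := by
        funext Y; simp [pow_succ]
      rw [e] at h
      refine h.congr_fderiv (Eq.symm ?_)
      refine ContinuousLinearMap.ext fun H => ?_
      simp only [ContinuousLinearMap.coe_sum', Finset.sum_apply,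
        ContinuousLinearMap.mulLeftRight_apply, ContinuousLinearMap.add_apply,
        ContinuousLinearMap.smul_apply, ContinuousLinearMap.coe_id', id_eq,
        ContinuousLinearMap.smulRight_apply, smul_eq_mul, op_smul_eq_mul, Finset.sum_range_succ,
        Finset.sum_mul]
      rw [Nat.add_sub_cancel, Nat.sub_self, pow_zero, mul_one]
      refine (add_comm _ _).trans ?_
      congr 1
      refine Finset.sum_congr rfl fun i hi => ?_
      have hik : i < k := Finset.mem_range.1 hi
      rw [show k - i = (k - 1 - i) + 1 by omega, pow_succ, ← mul_assoc]

lemma hasFDerivAt_trace_pow (k : ℕ) (X : M) :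
    HasFDerivAt (fun Y : M => ((k.factorial : ℝ))⁻¹ • (Y ^ k).trace)
      ((((k.factorial : ℝ))⁻¹ * (k : ℝ)) • traceMulCLM n (X ^ (k - 1))) X := by
  have h1 : HasFDerivAt (fun Y : M => (Y ^ k).trace)
      ((traceCLM n).comp (∑ i ∈ Finset.range k,
        ContinuousLinearMap.mulLeftRight ℝ M (X ^ i) (X ^ (k - 1 - i)))) X :=
    (traceCLM n).hasFDerivAt.comp X (hasFDerivAt_pow_matrix k X)
  have h2 := h1.const_smul ((k.factorial : ℝ))⁻¹
  refine h2.congr_fderiv (Eq.symm ?_)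
  rw [mul_smul]
  congr 1
  ext H
  simp only [ContinuousLinearMap.smul_apply, traceMulCLM_apply,
    ContinuousLinearMap.coe_comp', Function.comp_apply, ContinuousLinearMap.coe_sum',
    Finset.sum_apply, ContinuousLinearMap.mulLeftRight_apply, traceCLM_apply,
    smul_eq_mul]
  have hterm : ∀ i ∈ Finset.range k,
      (X ^ i * H * X ^ (k - 1 - i)).trace = (X ^ (k - 1) * H).trace := by
    intro i hi
    have hik : i < k := Finset.mem_range.1 hi
    rw [Matrix.trace_mul_cycle, ← pow_add, show k - 1 - i + i = k - 1 by omega]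
  rw [Matrix.trace_sum, Finset.sum_congr rfl hterm, Finset.sum_const, Finset.card_range,
    nsmul_eq_mul]

lemma hasFDerivAt_trace_exp (X : M) :
    HasFDerivAt (fun Y : M => (NormedSpace.exp Y).trace)
      (traceMulCLM n (NormedSpace.exp X)) X := by
  classical
  set R : ℝ := ‖X‖ + 1 with hR
  have hR0 : 0 < R := by positivity
  have hXs : X ∈ Metric.ball (0 : M) R := by
    rw [mem_ball_zero_iff]; simp [hR]
  set u : ℕ → ℝ := fun k => ‖traceMulCLM n‖ * (R ^ (k - 1) / (k - 1).factorial) with hu_def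
  have hu : Summable u := by
    apply Summable.mul_left
    refine (summable_nat_add_iff 1).1 ?_
    simpa using Real.summable_pow_div_factorial R
  have hf : ∀ (k : ℕ) (Y : M), Y ∈ Metric.ball (0 : M) R →
      HasFDerivAt (fun Z : M => ((k.factorial : ℝ))⁻¹ • (Z ^ k).trace)
        ((((k.factorial : ℝ))⁻¹ * (k : ℝ)) • traceMulCLM n (Y ^ (k - 1))) Y :=
    fun k Y _ => hasFDerivAt_trace_pow k Y
  have hcoef : ∀ k : ℕ, ((k.factorial : ℝ))⁻¹ * (k : ℝ) ≤ (((k - 1).factorial : ℝ))⁻¹ := by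
    intro k
    cases k with
    | zero => simp
    | succ m =>
        have h : ((m + 1).factorial : ℝ) = ((m : ℝ) + 1) * m.factorial := by
          push_cast [Nat.factorial_succ]; ring
        rw [Nat.add_sub_cancel, h, mul_inv]
        rw [mul_comm (((m : ℝ) + 1))⁻¹ _, mul_assoc]
        push_cast
        rw [inv_mul_cancel₀ (by positivity), mul_one]
  have hf' : ∀ (k : ℕ) (Y : M), Y ∈ Metric.ball (0 : M) R →
      ‖(((k.factorial : ℝ))⁻¹ * (k : ℝ)) • traceMulCLM n (Y ^ (k - 1))‖ ≤ u k := by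
    intro k Y hY
    have hYR : ‖Y‖ ≤ R := (mem_ball_zero_iff.1 hY).le
    have hns := norm_smul ((((k.factorial : ℝ))⁻¹ * (k : ℝ))) (traceMulCLM n (Y ^ (k - 1)))
    have h1 := (traceMulCLM n).le_opNorm (Y ^ (k - 1))
    have h1' : ‖traceMulCLM n (Y ^ (k - 1))‖ ≤ ‖traceMulCLM n‖ * R ^ (k - 1) :=
      le_trans h1 (mul_le_mul_of_nonneg_left (norm_pow_le_of_le hYR _) (norm_nonneg _))
    have h2 : ‖((k.factorial : ℝ))⁻¹ * (k : ℝ)‖ ≤ (((k - 1).factorial : ℝ))⁻¹ := by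
      rw [Real.norm_eq_abs, abs_of_nonneg (by positivity)]
      exact hcoef k
    calc ‖(((k.factorial : ℝ))⁻¹ * (k : ℝ)) • traceMulCLM n (Y ^ (k - 1))‖
        = ‖((k.factorial : ℝ))⁻¹ * (k : ℝ)‖ * ‖traceMulCLM n (Y ^ (k - 1))‖ := hns
      _ ≤ (((k - 1).factorial : ℝ))⁻¹ * (‖traceMulCLM n‖ * R ^ (k - 1)) :=
          mul_le_mul h2 h1' (norm_nonneg _) (by positivity)
      _ = u k := by rw [hu_def]; ring
  have hsum : Summable (fun k : ℕ => ((k.factorial : ℝ))⁻¹ • ((X ^ k).trace)) := by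
    have h := (NormedSpace.expSeries_summable' (𝕂 := ℝ) X).map
      (traceCLM n) ((traceCLM n).continuous)
    simpa [Function.comp_def, Matrix.trace_smul] using h
  have key := hasFDerivAt_tsum_of_isPreconnected hu Metric.isOpen_ball
    (convex_ball (0 : M) R).isPreconnected hf hf' hXs hsum hXs
  have hfun : (fun Y : M => ∑' k : ℕ, ((k.factorial : ℝ))⁻¹ • ((Y ^ k).trace)) =
      fun Y : M => (NormedSpace.exp Y).trace := by
    funext Y
    have h := ((NormedSpace.exp_series_hasSum_exp' (𝕂 := ℝ) Y).map
      (traceCLM n) ((traceCLM n).continuous)).tsum_eq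
    simpa [Function.comp_def, Matrix.trace_smul] using h
  have hXsum : HasSum (fun k : ℕ => (((k.factorial : ℝ))⁻¹ * (k : ℝ)) • X ^ (k - 1))
      (NormedSpace.exp X) := by
    have h := NormedSpace.exp_series_hasSum_exp' (𝕂 := ℝ) X
    have h1 : (fun m : ℕ => ((((m + 1).factorial : ℝ))⁻¹ * ((m + 1 : ℕ) : ℝ)) • X ^ (m + 1 - 1)) =
        fun m : ℕ => ((m.factorial : ℝ))⁻¹ • X ^ m := by
      funext m
      rw [Nat.add_sub_cancel]
      congr 1
      have hfac : ((m + 1).factorial : ℝ) = ((m : ℝ) + 1) * m.factorial := by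
        push_cast [Nat.factorial_succ]; ring
      rw [hfac, mul_inv, mul_comm (((m : ℝ) + 1))⁻¹ _, mul_assoc]
      push_cast
      rw [inv_mul_cancel₀ (by positivity), mul_one]
    have h2 := (hasSum_nat_add_iff
      (f := fun k : ℕ => (((k.factorial : ℝ))⁻¹ * (k : ℝ)) • X ^ (k - 1)) 1).1 (by rw [h1]; exact h)
    simpa using h2
  have hD : HasSum (fun k : ℕ => (((k.factorial : ℝ))⁻¹ * (k : ℝ)) • traceMulCLM n (X ^ (k - 1)))
      (traceMulCLM n (NormedSpace.exp X)) := by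
    have h := hXsum.mapL (traceMulCLM n)
    simpa [_root_.map_smul] using h
  rw [hfun, hD.tsum_eq] at key
  exact key

lemma trace_fderiv_exp_symm (A E G : M) :
    ((fderiv ℝ (NormedSpace.exp) A E) * G).trace =
      ((fderiv ℝ (NormedSpace.exp) A G) * E).trace := by
  have hd : HasFDerivAt (NormedSpace.exp) (fderiv ℝ (NormedSpace.exp) A) A :=
    ((NormedSpace.exp_analytic (𝕂 := ℝ) A).differentiableAt).hasFDerivAt
  have hB : HasFDerivAt (traceMulCLM n) (traceMulCLM n) (NormedSpace.exp A) :=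
    (traceMulCLM n).hasFDerivAt
  have h2 : HasFDerivAt (fun Y : M => traceMulCLM n (NormedSpace.exp Y))
      ((traceMulCLM n).comp (fderiv ℝ (NormedSpace.exp) A)) A :=
    HasFDerivAt.comp (g := ⇑(traceMulCLM n)) A hB hd
  have h3 := second_derivative_symmetric (fun Y => hasFDerivAt_trace_exp Y) h2 E G
  simpa using h3

lemma fderiv_exp_transpose_apply (A F : M) :
    fderiv ℝ (NormedSpace.exp) Aᵀ F = (fderiv ℝ (NormedSpace.exp) A Fᵀ)ᵀ := by
  let T : M →L[ℝ] M := LinearMap.toContinuousLinearMap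
    ((Matrix.transposeLinearEquiv (Fin n) (Fin n) ℝ ℝ).toLinearMap)
  have hT : ∀ Y : M, T Y = Yᵀ := fun _ => rfl
  have hd : HasFDerivAt (NormedSpace.exp) (fderiv ℝ (NormedSpace.exp) A) A :=
    ((NormedSpace.exp_analytic (𝕂 := ℝ) A).differentiableAt).hasFDerivAt
  have h0 : HasFDerivAt (fun X : M => NormedSpace.exp (T X))
      ((fderiv ℝ (NormedSpace.exp) A).comp T) Aᵀ := by
    refine HasFDerivAt.comp _ ?_ T.hasFDerivAt
    show HasFDerivAt (NormedSpace.exp) _ (T Aᵀ)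
    rw [hT, Matrix.transpose_transpose]
    exact hd
  have h1 : HasFDerivAt (fun X : M => T (NormedSpace.exp (T X)))
      (T.comp ((fderiv ℝ (NormedSpace.exp) A).comp T)) Aᵀ :=
    T.hasFDerivAt.comp _ h0
  have heq : (fun X : M => T (NormedSpace.exp (T X))) = NormedSpace.exp := by
    funext X
    rw [hT, hT]
    show (NormedSpace.exp Xᵀ)ᵀ = NormedSpace.exp X
    rw [show NormedSpace.exp Xᵀ = (NormedSpace.exp X)ᵀ from Matrix.exp_transpose X, Matrix.transpose_transpose]
  rw [heq] at h1
  rw [h1.fderiv]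
  simp only [ContinuousLinearMap.coe_comp', Function.comp_apply, hT]

lemma fderiv_matrix_exp_adjoint_aux (A E F : M) :
    ((fderiv ℝ (NormedSpace.exp) A E)ᵀ * F).trace =
      (Eᵀ * fderiv ℝ (NormedSpace.exp) Aᵀ F).trace := by
  have h1 : ∀ X Y : M, (Xᵀ * Y).trace = (X * Yᵀ).trace := by
    intro X Y
    rw [← Matrix.trace_transpose (Xᵀ * Y), Matrix.transpose_mul, Matrix.transpose_transpose,
      Matrix.trace_mul_comm]
  rw [h1, fderiv_exp_transpose_apply, h1, Matrix.transpose_transpose,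
    trace_fderiv_exp_symm A E Fᵀ, Matrix.trace_mul_comm]

end Aux

/-- The adjoint, with respect to the Frobenius (trace) inner product, of the Fréchet
derivative of the matrix exponential at `A` is the Fréchet derivative at `Aᵀ`. -/
theorem fderiv_matrix_exp_adjoint {n : ℕ} (A E F : Matrix (Fin n) (Fin n) ℝ) :
    ((fderiv ℝ (NormedSpace.exp) A E)ᵀ * F).trace =
      (Eᵀ * fderiv ℝ (NormedSpace.exp) Aᵀ F).trace := by
  have h1 : ∀ X Y : Matrix (Fin n) (Fin n) ℝ, (Xᵀ * Y).trace = (X * Yᵀ).trace := by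
    intro X Y
    rw [← Matrix.trace_transpose (Xᵀ * Y), Matrix.transpose_mul, Matrix.transpose_transpose,
      Matrix.trace_mul_comm]
  exact fderiv_matrix_exp_adjoint_aux A E F
end

section
/- Let a : ℕ → ℝ be coefficients such that for every r ≥ 0 the series ∑ₖ |aₖ| rᵏ / k! converges (i.e., the power series φ(x) = ∑ₖ (aₖ/k!) xᵏ is entire). Define the matrix function Φ on n×n real matrices by Φ(X) = ∑ₖ (aₖ/k!) Xᵏ. Then Φ is differentiable, and for every X the adjoint of its Fréchet derivative dΦ_X with respect to the Frobenius (trace) inner product equals dΦ_{Xᵀ}: for all n×n real matrices E, F, trace((dΦ_X(E))ᵀ F) = trace(Eᵀ dΦ_{Xᵀ}(F)). -/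
open Matrix

attribute [local instance] Matrix.linftyOpNormedRing Matrix.linftyOpNormedAlgebra

variable {n : ℕ}

noncomputable def matL (n k : ℕ) (X : Matrix (Fin n) (Fin n) ℝ) :
    Matrix (Fin n) (Fin n) ℝ →L[ℝ] Matrix (Fin n) (Fin n) ℝ :=
  ∑ i ∈ Finset.range k,
    ContinuousLinearMap.mulLeftRight ℝ _ (X ^ i) (X ^ (k - 1 - i))

lemma matL_apply (k : ℕ) (X E : Matrix (Fin n) (Fin n) ℝ) :
    matL n k X E = ∑ i ∈ Finset.range k, X ^ i * E * X ^ (k - 1 - i) := by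
  exact ContinuousLinearMap.sum_apply _ _ _

lemma hasFDerivAt_matPow (k : ℕ) (X : Matrix (Fin n) (Fin n) ℝ) :
    HasFDerivAt (fun Y : Matrix (Fin n) (Fin n) ℝ => Y ^ k) (matL n k X) X := by
  induction k with
  | zero =>
      have : matL n 0 X = 0 := by simp [matL]; rfl
      rw [this]
      simpa using hasFDerivAt_const (1 : Matrix (Fin n) (Fin n) ℝ) X
  | succ k ih =>
      have h := ih.mul' (hasFDerivAt_id X)
      have h' : HasFDerivAt (fun Y : Matrix (Fin n) (Fin n) ℝ => Y ^ (k + 1))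
          (X ^ k • ContinuousLinearMap.id ℝ (Matrix (Fin n) (Fin n) ℝ) +
            (matL n k X).smulRight X) X := by
        apply h.congr_of_eventuallyEq
        filter_upwards with Y using by rw [pow_succ]; rfl
      convert h' using 1
      ext E
      simp only [matL_apply, ContinuousLinearMap.add_apply, ContinuousLinearMap.smul_apply,
        ContinuousLinearMap.coe_id', id_eq, ContinuousLinearMap.smulRight_apply,
        smul_eq_mul]
      rw [Finset.sum_range_succ]
      rw [Finset.sum_mul]
      have : ∀ i ∈ Finset.range k,
          X ^ i * E * X ^ (k + 1 - 1 - i) = X ^ i * E * X ^ (k - 1 - i) * X := by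
        intro i hi
        rw [Finset.mem_range] at hi
        have hp : X ^ (k + 1 - 1 - i) = X ^ (k - 1 - i) * X := by
          rw [← pow_succ]; congr 1; omega
        rw [hp, ← mul_assoc]
      rw [Finset.sum_congr rfl this]
      simp [add_comm, mul_assoc]

noncomputable instance instNACGMatCLM :
    NormedAddCommGroup (Matrix (Fin n) (Fin n) ℝ →L[ℝ] Matrix (Fin n) (Fin n) ℝ) :=
  ContinuousLinearMap.toNormedAddCommGroup

noncomputable instance instNSMatCLM :
    NormedSpace ℝ (Matrix (Fin n) (Fin n) ℝ →L[ℝ] Matrix (Fin n) (Fin n) ℝ) :=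
  ContinuousLinearMap.toNormedSpace

instance instCSMatCLM :
    @CompleteSpace (Matrix (Fin n) (Fin n) ℝ →L[ℝ] Matrix (Fin n) (Fin n) ℝ)
      PseudoMetricSpace.toUniformSpace :=
  haveI : SequentialSpace (Matrix (Fin n) (Fin n) ℝ) :=
    inferInstanceAs (SequentialSpace (Fin n → Fin n → ℝ))
  ContinuousLinearMap.instCompleteSpace

lemma norm_one_le_matrix : ‖(1 : Matrix (Fin n) (Fin n) ℝ)‖ ≤ 1 := by
  have h1 : (1 : Matrix (Fin n) (Fin n) ℝ) = Matrix.diagonal (fun _ => (1:ℝ)) := by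
    simp
  rw [h1, Matrix.linfty_opNorm_diagonal]
  exact (pi_norm_le_iff_of_nonneg zero_le_one).2 fun i => by simp

lemma norm_pow_le_matrix (X : Matrix (Fin n) (Fin n) ℝ) {R : ℝ} (hX : ‖X‖ ≤ R) (i : ℕ) :
    ‖X ^ i‖ ≤ R ^ i := by
  induction i with
  | zero => rw [pow_zero, pow_zero]; exact norm_one_le_matrix
  | succ i ih =>
      rw [pow_succ, pow_succ]
      calc ‖X ^ i * X‖ ≤ ‖X ^ i‖ * ‖X‖ := norm_mul_le _ _
        _ ≤ R ^ i * R := by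
            apply mul_le_mul ih hX (norm_nonneg _)
            exact pow_nonneg ((norm_nonneg X).trans hX) i

lemma norm_matL_le (k : ℕ) (X : Matrix (Fin n) (Fin n) ℝ) {R : ℝ} (hR : 1 ≤ R)
    (hX : ‖X‖ ≤ R) : ‖matL n k X‖ ≤ (k : ℝ) * R ^ (k - 1) := by
  have hR0 : (0:ℝ) ≤ R := zero_le_one.trans hR
  calc ‖matL n k X‖ ≤ ∑ i ∈ Finset.range k,
        ‖ContinuousLinearMap.mulLeftRight ℝ _ (X ^ i) (X ^ (k - 1 - i))‖ :=
        norm_sum_le _ _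
    _ ≤ ∑ i ∈ Finset.range k, R ^ (k - 1) := by
        apply Finset.sum_le_sum
        intro i hi
        rw [Finset.mem_range] at hi
        calc ‖ContinuousLinearMap.mulLeftRight ℝ _ (X ^ i) (X ^ (k - 1 - i))‖
            ≤ ‖X ^ i‖ * ‖X ^ (k - 1 - i)‖ :=
              ContinuousLinearMap.opNorm_mulLeftRight_apply_apply_le _ _ _ _
          _ ≤ R ^ i * R ^ (k - 1 - i) := by
              apply mul_le_mul (norm_pow_le_matrix X hX i) (norm_pow_le_matrix X hX _)
                (norm_nonneg _) (pow_nonneg hR0 i)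
          _ = R ^ (k - 1) := by rw [← pow_add]; congr 1; omega
    _ = (k : ℝ) * R ^ (k - 1) := by simp [Finset.sum_const, nsmul_eq_mul]

lemma k_pow_bound {R : ℝ} (hR : 1 ≤ R) (k : ℕ) :
    (k : ℝ) * R ^ (k - 1) ≤ (2 * R) ^ k := by
  have hR0 : (0:ℝ) ≤ R := zero_le_one.trans hR
  have h1 : (k : ℝ) ≤ 2 ^ k := by
    exact_mod_cast (Nat.lt_two_pow_self (n := k)).le
  have h2 : R ^ (k - 1) ≤ R ^ k := pow_le_pow_right₀ hR (Nat.sub_le k 1)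
  calc (k : ℝ) * R ^ (k - 1) ≤ 2 ^ k * R ^ k := by
        apply mul_le_mul h1 h2 (pow_nonneg hR0 _) (pow_nonneg (by norm_num) k)
    _ = (2 * R) ^ k := (mul_pow 2 R k).symm

lemma norm_coeff_matL_le (a : ℕ → ℝ) (k : ℕ) (x : Matrix (Fin n) (Fin n) ℝ) {R : ℝ}
    (hR : 1 ≤ R) (hx : ‖x‖ ≤ R) :
    ‖(a k / (Nat.factorial k : ℝ)) • matL n k x‖ ≤
      |a k| * (2 * R) ^ k / (Nat.factorial k : ℝ) := by
  rw [norm_smul (a k / (Nat.factorial k : ℝ)) (matL n k x)]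
  have h1 : ‖a k / (Nat.factorial k : ℝ)‖ = |a k| / (Nat.factorial k : ℝ) := by
    rw [Real.norm_eq_abs, abs_div, Nat.abs_cast]
  rw [h1]
  have h2 : ‖matL n k x‖ ≤ (2 * R) ^ k :=
    (norm_matL_le k x hR hx).trans (k_pow_bound hR k)
  have hfac : (0:ℝ) < (Nat.factorial k : ℝ) := by positivity
  calc |a k| / (Nat.factorial k : ℝ) * ‖matL n k x‖
      ≤ |a k| / (Nat.factorial k : ℝ) * (2 * R) ^ k := by
        apply mul_le_mul_of_nonneg_left h2 (by positivity)
    _ = |a k| * (2 * R) ^ k / (Nat.factorial k : ℝ) := by ring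

lemma key_hasFDerivAt (a : ℕ → ℝ)
    (ha : ∀ r : ℝ, 0 ≤ r → Summable fun k : ℕ => |a k| * r ^ k / (Nat.factorial k : ℝ))
    (X : Matrix (Fin n) (Fin n) ℝ) :
    HasFDerivAt
      (fun Y : Matrix (Fin n) (Fin n) ℝ =>
        ∑' k : ℕ, (a k / (Nat.factorial k : ℝ)) • Y ^ k)
      (∑' k : ℕ, (a k / (Nat.factorial k : ℝ)) • matL n k X) X := by
  set R : ℝ := max (‖X‖ + 1) 1 with hRdef
  have hR1 : 1 ≤ R := le_max_right _ _
  have hR0 : (0:ℝ) < R := lt_of_lt_of_le one_pos hR1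
  apply hasFDerivAt_tsum_of_isPreconnected
    (u := fun k => |a k| * (2 * R) ^ k / (Nat.factorial k : ℝ))
    (f := fun k Y => (a k / (Nat.factorial k : ℝ)) • Y ^ k)
    (f' := fun k Y => (a k / (Nat.factorial k : ℝ)) • matL n k Y)
    (s := Metric.ball (0 : Matrix (Fin n) (Fin n) ℝ) R)
    (x₀ := (0 : Matrix (Fin n) (Fin n) ℝ))
  · exact ha (2 * R) (by positivity)
  · exact Metric.isOpen_ball
  · exact (convex_ball _ _).isPreconnected
  · intro k x _
    exact (hasFDerivAt_matPow k x).const_smul (a k / (Nat.factorial k : ℝ))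
  · intro k x hx
    rw [Metric.mem_ball, dist_zero_right] at hx
    exact norm_coeff_matL_le a k x hR1 hx.le
  · simpa using hR0
  · apply summable_of_ne_finset_zero (s := ({0} : Finset ℕ))
    intro k hk
    have hk0 : k ≠ 0 := by simpa using hk
    simp [zero_pow hk0]
  · rw [Metric.mem_ball, dist_zero_right]
    calc ‖X‖ < ‖X‖ + 1 := lt_add_one _
      _ ≤ R := le_max_left _ _

lemma summable_coeff_matL (a : ℕ → ℝ)
    (ha : ∀ r : ℝ, 0 ≤ r → Summable fun k : ℕ => |a k| * r ^ k / (Nat.factorial k : ℝ))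
    (X : Matrix (Fin n) (Fin n) ℝ) :
    Summable fun k : ℕ => (a k / (Nat.factorial k : ℝ)) • matL n k X := by
  set R : ℝ := max (‖X‖ + 1) 1 with hRdef
  have hR1 : 1 ≤ R := le_max_right _ _
  apply Summable.of_norm
  apply Summable.of_nonneg_of_le (fun k => norm_nonneg _)
    (fun k => norm_coeff_matL_le a k X hR1
      (le_max_of_le_left (le_of_lt (lt_add_one _))))
  exact ha (2 * R) (by positivity)

lemma trace_conj_aux (A B C D : Matrix (Fin n) (Fin n) ℝ) :
    ((A * B * C)ᵀ * D).trace = (Bᵀ * (Aᵀ * D * Cᵀ)).trace := by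
  rw [Matrix.transpose_mul, Matrix.transpose_mul, mul_assoc, Matrix.trace_mul_comm]
  simp [Matrix.mul_assoc]

lemma trace_matL_adjoint (k : ℕ) (X E F : Matrix (Fin n) (Fin n) ℝ) :
    ((matL n k X E)ᵀ * F).trace = (Eᵀ * matL n k Xᵀ F).trace := by
  rw [matL_apply, matL_apply]
  rw [Matrix.transpose_sum, Finset.sum_mul, Matrix.trace_sum,
    Finset.mul_sum, Matrix.trace_sum]
  apply Finset.sum_congr rfl
  intro i _
  rw [trace_conj_aux, Matrix.transpose_pow, Matrix.transpose_pow]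

/-- For an entire real power series `φ(x) = ∑ₖ (aₖ / k!) xᵏ`, the associated matrix
function `Φ(X) = ∑ₖ (aₖ / k!) Xᵏ` is differentiable and the adjoint of its Fréchet
derivative at `X`, with respect to the Frobenius (trace) inner product, is the Fréchet
derivative at `Xᵀ`. -/
theorem fderiv_matrix_analytic_adjoint {n : ℕ} (a : ℕ → ℝ)
    (ha : ∀ r : ℝ, 0 ≤ r → Summable fun k : ℕ => |a k| * r ^ k / (Nat.factorial k : ℝ)) :
    Differentiable ℝ
      (fun X : Matrix (Fin n) (Fin n) ℝ =>
        ∑' k : ℕ, (a k / (Nat.factorial k : ℝ)) • X ^ k) ∧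
    ∀ X E F : Matrix (Fin n) (Fin n) ℝ,
      ((fderiv ℝ
            (fun X : Matrix (Fin n) (Fin n) ℝ =>
              ∑' k : ℕ, (a k / (Nat.factorial k : ℝ)) • X ^ k) X E)ᵀ * F).trace =
        (Eᵀ *
          fderiv ℝ
            (fun X : Matrix (Fin n) (Fin n) ℝ =>
              ∑' k : ℕ, (a k / (Nat.factorial k : ℝ)) • X ^ k) Xᵀ F).trace := by
  constructor
  · exact fun X => (key_hasFDerivAt a ha X).differentiableAt
  · intro X E F
    rw [(key_hasFDerivAt a ha X).fderiv, (key_hasFDerivAt a ha Xᵀ).fderiv]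
    have hsX := summable_coeff_matL a ha X
    have hsXT := summable_coeff_matL a ha Xᵀ
    -- continuous linear functionals
    let ψ1 : Matrix (Fin n) (Fin n) ℝ →ₗ[ℝ] ℝ :=
      { toFun := fun G => (Gᵀ * F).trace
        map_add' := by
          intro G H
          simp [Matrix.transpose_add, Matrix.add_mul]
        map_smul' := by
          intro c G
          simp [Matrix.transpose_smul, Matrix.smul_mul] }
    let ψ2 : Matrix (Fin n) (Fin n) ℝ →ₗ[ℝ] ℝ :=
      { toFun := fun G => (Eᵀ * G).trace
        map_add' := by
          intro G H
          simp [Matrix.mul_add]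
        map_smul' := by
          intro c G
          simp [Matrix.mul_smul] }
    let Θ1 : (Matrix (Fin n) (Fin n) ℝ →L[ℝ] Matrix (Fin n) (Fin n) ℝ) →L[ℝ] ℝ :=
      (LinearMap.toContinuousLinearMap ψ1).comp
        (ContinuousLinearMap.apply ℝ (Matrix (Fin n) (Fin n) ℝ) E)
    let Θ2 : (Matrix (Fin n) (Fin n) ℝ →L[ℝ] Matrix (Fin n) (Fin n) ℝ) →L[ℝ] ℝ :=
      (LinearMap.toContinuousLinearMap ψ2).comp
        (ContinuousLinearMap.apply ℝ (Matrix (Fin n) (Fin n) ℝ) F)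
    have hL : (((∑' k : ℕ, (a k / (Nat.factorial k : ℝ)) • matL n k X) E)ᵀ * F).trace
        = Θ1 (∑' k : ℕ, (a k / (Nat.factorial k : ℝ)) • matL n k X) := rfl
    have hR : (Eᵀ * (∑' k : ℕ, (a k / (Nat.factorial k : ℝ)) • matL n k Xᵀ) F).trace
        = Θ2 (∑' k : ℕ, (a k / (Nat.factorial k : ℝ)) • matL n k Xᵀ) := rfl
    rw [hL, hR, Θ1.map_tsum hsX, Θ2.map_tsum hsXT]
    apply tsum_congr
    intro k
    show ((((a k / (Nat.factorial k : ℝ)) • matL n k X) E)ᵀ * F).trace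
      = (Eᵀ * (((a k / (Nat.factorial k : ℝ)) • matL n k Xᵀ) F)).trace
    simp only [ContinuousLinearMap.smul_apply, Matrix.transpose_smul,
      Matrix.smul_mul, Matrix.mul_smul, Matrix.trace_smul, smul_eq_mul]
    rw [trace_matL_adjoint]
end

section
/- Gradient of the dynamic Lie trivialization: let B be an invertible n×n real matrix and define exp_B(A) = B · exp(B⁻¹A) for n×n real matrices A. Let f be a real-valued function on n×n real matrices that is differentiable at exp_B(A) with (Frobenius) gradient G, and let D' be the Fréchet derivative of the matrix exponential at (B⁻¹A)ᵀ. Then f ∘ exp_B is differentiable at A with gradient (B⁻¹)ᵀ · D'(Bᵀ G); i.e., grad(f ∘ exp_B)(A) = (B⁻¹)ᵀ (d exp)_{(B⁻¹A)ᵀ}(Bᵀ grad f(exp_B(A))). -/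
open Matrix

attribute [local instance] Matrix.linftyOpNormedRing Matrix.linftyOpNormedAlgebra

set_option linter.unusedSectionVars false

namespace DLieTriv

variable {𝔸 : Type*} [NormedRing 𝔸] [NormedAlgebra ℝ 𝔸] [CompleteSpace 𝔸]

noncomputable def P (M : 𝔸) (k : ℕ) : 𝔸 →L[ℝ] 𝔸 :=
  ∑ i ∈ Finset.range k,
    (ContinuousLinearMap.mul ℝ 𝔸 (M ^ i)).comp
      ((ContinuousLinearMap.mul ℝ 𝔸).flip (M ^ (k - 1 - i)))

lemma P_apply (M H : 𝔸) (k : ℕ) :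
    P M k H = ∑ i ∈ Finset.range k, M ^ i * (H * M ^ (k - 1 - i)) := by
  simp [P]

/-- constant covering `‖1‖` -/
noncomputable def C (𝔸 : Type*) [NormedRing 𝔸] : ℝ := max 1 ‖(1 : 𝔸)‖

lemma one_le_C : 1 ≤ C 𝔸 := le_max_left _ _
lemma C_nonneg : 0 ≤ C 𝔸 := le_trans zero_le_one one_le_C

lemma norm_pow_le_C (M : 𝔸) (i : ℕ) : ‖M ^ i‖ ≤ C 𝔸 * ‖M‖ ^ i := by
  cases i with
  | zero => simpa [C] using le_max_right 1 ‖(1 : 𝔸)‖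
  | succ i =>
      calc ‖M ^ (i+1)‖ ≤ ‖M‖ ^ (i+1) := norm_pow_le' M (Nat.succ_pos i)
        _ ≤ C 𝔸 * ‖M‖ ^ (i+1) := le_mul_of_one_le_left (by positivity) one_le_C

lemma norm_P_apply_le (M H : 𝔸) (k : ℕ) :
    ‖P M k H‖ ≤ (k : ℝ) * (C 𝔸 ^ 2 * ‖M‖ ^ (k - 1)) * ‖H‖ := by
  rw [P_apply]
  calc ‖∑ i ∈ Finset.range k, M ^ i * (H * M ^ (k - 1 - i))‖
      ≤ ∑ i ∈ Finset.range k, ‖M ^ i * (H * M ^ (k - 1 - i))‖ := norm_sum_le _ _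
    _ ≤ ∑ i ∈ Finset.range k, C 𝔸 ^ 2 * ‖M‖ ^ (k - 1) * ‖H‖ := by
        refine Finset.sum_le_sum fun i hi => ?_
        have hik : i < k := Finset.mem_range.mp hi
        have h1 : ‖M ^ i * (H * M ^ (k - 1 - i))‖
            ≤ (C 𝔸 * ‖M‖ ^ i) * (‖H‖ * (C 𝔸 * ‖M‖ ^ (k - 1 - i))) := by
          refine (norm_mul_le _ _).trans ?_
          refine mul_le_mul (norm_pow_le_C M i) ((norm_mul_le _ _).trans ?_)
            (norm_nonneg _) (mul_nonneg C_nonneg (by positivity))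
          exact mul_le_mul_of_nonneg_left (norm_pow_le_C M _) (norm_nonneg _)
        refine h1.trans (le_of_eq ?_)
        have h2 : ‖M‖ ^ i * ‖M‖ ^ (k - 1 - i) = ‖M‖ ^ (k - 1) := by
          rw [← pow_add]; congr 1; omega
        rw [← h2]; ring
    _ = (k : ℝ) * (C 𝔸 ^ 2 * ‖M‖ ^ (k - 1)) * ‖H‖ := by
        rw [Finset.sum_const, Finset.card_range, nsmul_eq_mul]
        ring

lemma norm_P_le (M : 𝔸) (k : ℕ) :
    ‖P M k‖ ≤ (k : ℝ) * (C 𝔸 ^ 2 * ‖M‖ ^ (k - 1)) := by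
  refine ContinuousLinearMap.opNorm_le_bound _
    (mul_nonneg (Nat.cast_nonneg k) (mul_nonneg (pow_nonneg C_nonneg 2) (by positivity)))
    fun H => ?_
  exact norm_P_apply_le M H k

noncomputable def R (M H : 𝔸) (k : ℕ) : 𝔸 := (M + H) ^ k - M ^ k - P M k H

lemma R_zero (M H : 𝔸) : R M H 0 = 0 := by simp [R, P_apply]

lemma P_succ (M H : 𝔸) (k : ℕ) :
    P M (k + 1) H = P M k H * M + M ^ k * H := by
  simp only [P_apply]
  rw [Finset.sum_range_succ, Finset.sum_mul]
  congr 1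
  · refine Finset.sum_congr rfl fun i hi => ?_
    have hik : i < k := Finset.mem_range.mp hi
    have h1 : k + 1 - 1 - i = (k - 1 - i) + 1 := by omega
    rw [h1, pow_succ]
    simp [mul_assoc]
  · simp

lemma R_succ (M H : 𝔸) (k : ℕ) :
    R M H (k + 1) = R M H k * (M + H) + P M k H * H := by
  simp only [R, P_succ, pow_succ]
  noncomm_ring

lemma norm_R_le (M H : 𝔸) (hH : ‖H‖ ≤ 1) (k : ℕ) :
    ‖R M H k‖ ≤ C 𝔸 ^ 2 * ((k : ℝ) ^ 2 * (1 + ‖M‖) ^ k) * ‖H‖ ^ 2 := by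
  have hC2 : (0 : ℝ) ≤ C 𝔸 ^ 2 := pow_nonneg C_nonneg 2
  induction k with
  | zero => simp [R_zero]
  | succ k ih =>
      have hm : (0 : ℝ) ≤ ‖M‖ := norm_nonneg M
      have hk : (0 : ℝ) ≤ (k : ℝ) := Nat.cast_nonneg k
      have h1m : (0 : ℝ) ≤ (1 + ‖M‖) ^ k := by positivity
      have hmh : ‖M + H‖ ≤ 1 + ‖M‖ := (norm_add_le _ _).trans (by linarith)
      have hpow : ‖M‖ ^ (k - 1) ≤ (1 + ‖M‖) ^ k :=
        le_trans (pow_le_pow_left₀ hm (by linarith) _)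
          (pow_le_pow_right₀ (by linarith) (Nat.sub_le k 1))
      have hb : (0 : ℝ) ≤ C 𝔸 ^ 2 * ((k : ℝ) ^ 2 * (1 + ‖M‖) ^ k) * ‖H‖ ^ 2 := by
        refine mul_nonneg (mul_nonneg hC2 ?_) (by positivity)
        positivity
      have hPb : ‖P M k H‖ ≤ (k : ℝ) * (C 𝔸 ^ 2 * (1 + ‖M‖) ^ k) * ‖H‖ := by
        refine (norm_P_apply_le M H k).trans ?_
        refine mul_le_mul_of_nonneg_right (mul_le_mul_of_nonneg_left ?_ hk) (norm_nonneg H)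
        exact mul_le_mul_of_nonneg_left hpow hC2
      calc ‖R M H (k + 1)‖ = ‖R M H k * (M + H) + P M k H * H‖ := by rw [R_succ]
        _ ≤ ‖R M H k‖ * ‖M + H‖ + ‖P M k H‖ * ‖H‖ :=
            (norm_add_le _ _).trans (add_le_add (norm_mul_le _ _) (norm_mul_le _ _))
        _ ≤ (C 𝔸 ^ 2 * ((k : ℝ) ^ 2 * (1 + ‖M‖) ^ k) * ‖H‖ ^ 2) * (1 + ‖M‖)
              + ((k : ℝ) * (C 𝔸 ^ 2 * (1 + ‖M‖) ^ k) * ‖H‖) * ‖H‖ :=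
            add_le_add (mul_le_mul ih hmh (norm_nonneg _) hb)
              (mul_le_mul_of_nonneg_right hPb (norm_nonneg H))
        _ = (C 𝔸 ^ 2 * (1 + ‖M‖) ^ k * ‖H‖ ^ 2) * ((k : ℝ) ^ 2 * (1 + ‖M‖) + k) := by
            ring
        _ ≤ (C 𝔸 ^ 2 * (1 + ‖M‖) ^ k * ‖H‖ ^ 2) * (((k : ℝ) + 1) ^ 2 * (1 + ‖M‖)) := by
            refine mul_le_mul_of_nonneg_left ?_
              (mul_nonneg (mul_nonneg hC2 h1m) (by positivity))
            nlinarith [mul_nonneg hk hm]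
        _ = C 𝔸 ^ 2 * (((k + 1 : ℕ) : ℝ) ^ 2 * (1 + ‖M‖) ^ (k + 1)) * ‖H‖ ^ 2 := by
            push_cast; ring


lemma nat_le_two_pow (k : ℕ) : (k : ℝ) ≤ 2 ^ k := by
  exact_mod_cast (Nat.lt_two_pow_self (n := k)).le

lemma cast_le_four_pow (k : ℕ) : (k : ℝ) ≤ 4 ^ k :=
  (nat_le_two_pow k).trans (pow_le_pow_left₀ (by norm_num) (by norm_num) k)

lemma sq_cast_le_four_pow (k : ℕ) : (k : ℝ) ^ 2 ≤ 4 ^ k := by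
  have h := nat_le_two_pow k
  have hk : (0 : ℝ) ≤ (k : ℝ) := Nat.cast_nonneg k
  calc (k : ℝ) ^ 2 ≤ (2 ^ k) ^ 2 := pow_le_pow_left₀ hk h 2
    _ = 4 ^ k := by rw [← pow_mul, mul_comm, pow_mul]; norm_num

lemma summable_P (M : 𝔸) :
    Summable fun k : ℕ => (k.factorial : ℝ)⁻¹ • P M k := by
  have hm : (0 : ℝ) ≤ ‖M‖ := norm_nonneg M
  refine Summable.of_norm_bounded
    (g := fun k => C 𝔸 ^ 2 * ((4 * (1 + ‖M‖)) ^ k / k.factorial))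
    (((Real.summable_pow_div_factorial (4 * (1 + ‖M‖))).mul_left _)) fun k => ?_
  refine le_trans (ContinuousLinearMap.opNorm_smul_le _ _) ?_
  rw [norm_inv, Real.norm_natCast]
  have hfac : (0 : ℝ) < k.factorial := by exact_mod_cast k.factorial_pos
  have h1 : ‖P M k‖ ≤ C 𝔸 ^ 2 * (4 * (1 + ‖M‖)) ^ k := by
    refine (norm_P_le M k).trans ?_
    have hpow : ‖M‖ ^ (k - 1) ≤ (1 + ‖M‖) ^ k :=
      le_trans (pow_le_pow_left₀ hm (by linarith) _)
        (pow_le_pow_right₀ (by linarith) (Nat.sub_le k 1))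
    have h2 : (k : ℝ) * ‖M‖ ^ (k - 1) ≤ 4 ^ k * (1 + ‖M‖) ^ k :=
      mul_le_mul (cast_le_four_pow k) hpow (by positivity) (by positivity)
    calc (k : ℝ) * (C 𝔸 ^ 2 * ‖M‖ ^ (k - 1))
        = C 𝔸 ^ 2 * ((k : ℝ) * ‖M‖ ^ (k - 1)) := by ring
      _ ≤ C 𝔸 ^ 2 * (4 ^ k * (1 + ‖M‖) ^ k) :=
          mul_le_mul_of_nonneg_left h2 (pow_nonneg C_nonneg 2)
      _ = C 𝔸 ^ 2 * (4 * (1 + ‖M‖)) ^ k := by rw [mul_pow]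
  calc (k.factorial : ℝ)⁻¹ * ‖P M k‖ ≤ (k.factorial : ℝ)⁻¹ * (C 𝔸 ^ 2 * (4 * (1 + ‖M‖)) ^ k) :=
        mul_le_mul_of_nonneg_left h1 (by positivity)
    _ = C 𝔸 ^ 2 * ((4 * (1 + ‖M‖)) ^ k / k.factorial) := by
        field_simp

/-- The derivative of `exp` at `M`. -/
noncomputable def D (M : 𝔸) : 𝔸 →L[ℝ] 𝔸 := ∑' k : ℕ, (k.factorial : ℝ)⁻¹ • P M k

lemma D_hasSum_apply (M H : 𝔸) :
    HasSum (fun k : ℕ => (k.factorial : ℝ)⁻¹ • P M k H) (D M H) := by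
  have h := (summable_P M).hasSum.mapL (ContinuousLinearMap.apply ℝ 𝔸 H)
  simpa [D] using h

theorem hasFDerivAt_exp (M : 𝔸) : HasFDerivAt (NormedSpace.exp) (D M) M := by
  rw [hasFDerivAt_iff_isLittleO_nhds_zero]
  have key : ∀ H : 𝔸,
      NormedSpace.exp (M + H) - NormedSpace.exp M - D M H
        = ∑' k : ℕ, (k.factorial : ℝ)⁻¹ • R M H k := by
    intro H
    have h1 : HasSum (fun k : ℕ => (k.factorial : ℝ)⁻¹ • (M + H) ^ k)
        (NormedSpace.exp (M + H)) := NormedSpace.exp_series_hasSum_exp' (M + H)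
    have h2 : HasSum (fun k : ℕ => (k.factorial : ℝ)⁻¹ • M ^ k)
        (NormedSpace.exp M) := NormedSpace.exp_series_hasSum_exp' M
    have h3 := D_hasSum_apply M H
    have h4 := (h1.sub h2).sub h3
    have h5 : (fun k : ℕ => ((k.factorial : ℝ)⁻¹ • (M + H) ^ k - (k.factorial : ℝ)⁻¹ • M ^ k)
        - (k.factorial : ℝ)⁻¹ • P M k H) = fun k => (k.factorial : ℝ)⁻¹ • R M H k := by
      funext k
      rw [← smul_sub, ← smul_sub]
      rfl
    rw [h5] at h4
    exact h4.tsum_eq.symm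
  have hlittle : (fun H : 𝔸 => ‖H‖ ^ 2) =o[nhds (0 : 𝔸)] fun H => H := by
    rw [Asymptotics.isLittleO_iff]
    intro ε hε
    filter_upwards [Metric.ball_mem_nhds (0 : 𝔸) hε] with H hH
    rw [Metric.mem_ball, dist_zero_right] at hH
    have : ‖H‖ ^ 2 = ‖H‖ * ‖H‖ := sq ‖H‖
    rw [Real.norm_of_nonneg (by positivity), this]
    exact mul_le_mul_of_nonneg_right hH.le (norm_nonneg H)
  refine Asymptotics.IsBigO.trans_isLittleO ?_ hlittle
  rw [Asymptotics.isBigO_iff]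
  refine ⟨C 𝔸 ^ 2 * ∑' k : ℕ, (4 * (1 + ‖M‖)) ^ k / k.factorial, ?_⟩
  filter_upwards [Metric.ball_mem_nhds (0 : 𝔸) one_pos] with H hH
  rw [Metric.mem_ball, dist_zero_right] at hH
  have hH1 : ‖H‖ ≤ 1 := hH.le
  rw [key H]
  have hm : (0 : ℝ) ≤ ‖M‖ := norm_nonneg M
  have hsummand : ∀ k : ℕ, ‖(k.factorial : ℝ)⁻¹ • R M H k‖
      ≤ C 𝔸 ^ 2 * ((4 * (1 + ‖M‖)) ^ k / k.factorial) * ‖H‖ ^ 2 := by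
    intro k
    refine le_trans (norm_smul_le _ _) ?_
    rw [norm_inv, Real.norm_natCast]
    have h1 : ‖R M H k‖ ≤ C 𝔸 ^ 2 * ((k : ℝ) ^ 2 * (1 + ‖M‖) ^ k) * ‖H‖ ^ 2 :=
      norm_R_le M H hH1 k
    have h2 : (k : ℝ) ^ 2 * (1 + ‖M‖) ^ k ≤ (4 * (1 + ‖M‖)) ^ k := by
      rw [mul_pow]
      exact mul_le_mul_of_nonneg_right (sq_cast_le_four_pow k) (by positivity)
    have hfac : (0 : ℝ) < k.factorial := by exact_mod_cast k.factorial_pos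
    calc (k.factorial : ℝ)⁻¹ * ‖R M H k‖
        ≤ (k.factorial : ℝ)⁻¹ * (C 𝔸 ^ 2 * ((4 * (1 + ‖M‖)) ^ k) * ‖H‖ ^ 2) := by
          refine mul_le_mul_of_nonneg_left (h1.trans ?_) (by positivity)
          refine mul_le_mul_of_nonneg_right (mul_le_mul_of_nonneg_left h2 ?_) (by positivity)
          exact pow_nonneg C_nonneg 2
      _ = C 𝔸 ^ 2 * ((4 * (1 + ‖M‖)) ^ k / k.factorial) * ‖H‖ ^ 2 := by
          field_simp
  have hsumb : Summable fun k : ℕ => C 𝔸 ^ 2 * ((4 * (1 + ‖M‖)) ^ k / k.factorial) * ‖H‖ ^ 2 :=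
    ((Real.summable_pow_div_factorial (4 * (1 + ‖M‖))).mul_left _).mul_right _
  have hnorm_sum : Summable fun k : ℕ => ‖(k.factorial : ℝ)⁻¹ • R M H k‖ :=
    Summable.of_nonneg_of_le (fun k => norm_nonneg _) hsummand hsumb
  calc ‖∑' k : ℕ, (k.factorial : ℝ)⁻¹ • R M H k‖
      ≤ ∑' k : ℕ, ‖(k.factorial : ℝ)⁻¹ • R M H k‖ := norm_tsum_le_tsum_norm hnorm_sum
    _ ≤ ∑' k : ℕ, C 𝔸 ^ 2 * ((4 * (1 + ‖M‖)) ^ k / k.factorial) * ‖H‖ ^ 2 :=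
        Summable.tsum_le_tsum hsummand hnorm_sum hsumb
    _ = (C 𝔸 ^ 2 * ∑' k : ℕ, (4 * (1 + ‖M‖)) ^ k / k.factorial) * ‖H‖ ^ 2 := by
        rw [tsum_mul_right, tsum_mul_left]
    _ ≤ (C 𝔸 ^ 2 * ∑' k : ℕ, (4 * (1 + ‖M‖)) ^ k / k.factorial) * ‖‖H‖ ^ 2‖ := by
        rw [Real.norm_of_nonneg (by positivity)]


section MatrixPart

variable {n : ℕ}

noncomputable def traceMulLeftCLM (L : Matrix (Fin n) (Fin n) ℝ) :
    Matrix (Fin n) (Fin n) ℝ →L[ℝ] ℝ :=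
  LinearMap.toContinuousLinearMap
    ((Matrix.traceLinearMap (Fin n) ℝ ℝ).comp (LinearMap.mulLeft ℝ L))

@[simp] lemma traceMulLeftCLM_apply (L Z : Matrix (Fin n) (Fin n) ℝ) :
    traceMulLeftCLM L Z = (L * Z).trace := rfl

noncomputable def traceMulRightCLM (X : Matrix (Fin n) (Fin n) ℝ) :
    Matrix (Fin n) (Fin n) ℝ →L[ℝ] ℝ :=
  LinearMap.toContinuousLinearMap
    ((Matrix.traceLinearMap (Fin n) ℝ ℝ).comp (LinearMap.mulRight ℝ X))

@[simp] lemma traceMulRightCLM_apply (X Z : Matrix (Fin n) (Fin n) ℝ) :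
    traceMulRightCLM X Z = (Z * X).trace := rfl

noncomputable def transposeCLM :
    Matrix (Fin n) (Fin n) ℝ →L[ℝ] Matrix (Fin n) (Fin n) ℝ :=
  LinearMap.toContinuousLinearMap
    { toFun := Matrix.transpose
      map_add' := fun _ _ => Matrix.transpose_add _ _
      map_smul' := fun _ _ => Matrix.transpose_smul _ _ }

@[simp] lemma transposeCLM_apply (Z : Matrix (Fin n) (Fin n) ℝ) :
    transposeCLM Z = Zᵀ := rfl

lemma P_trace_comm (M L X : Matrix (Fin n) (Fin n) ℝ) (k : ℕ) :
    (L * P M k X).trace = (P M k L * X).trace := by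
  rw [P_apply, P_apply, Finset.mul_sum, Finset.sum_mul, Matrix.trace_sum, Matrix.trace_sum]
  rw [← Finset.sum_range_reflect (fun i => (M ^ i * (L * M ^ (k - 1 - i)) * X).trace) k]
  refine Finset.sum_congr rfl fun j hj => ?_
  have hjk : j < k := Finset.mem_range.mp hj
  have h1 : k - 1 - (k - 1 - j) = j := by omega
  rw [h1]
  calc (L * (M ^ j * (X * M ^ (k - 1 - j)))).trace
      = (L * M ^ j * (X * M ^ (k - 1 - j))).trace := by rw [mul_assoc]
    _ = (X * M ^ (k - 1 - j) * (L * M ^ j)).trace := Matrix.trace_mul_comm _ _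
    _ = (X * (M ^ (k - 1 - j) * (L * M ^ j))).trace := by rw [mul_assoc]
    _ = (M ^ (k - 1 - j) * (L * M ^ j) * X).trace := Matrix.trace_mul_comm _ _

lemma P_transpose (M K : Matrix (Fin n) (Fin n) ℝ) (k : ℕ) :
    (P Mᵀ k K)ᵀ = P M k Kᵀ := by
  rw [P_apply, P_apply, Matrix.transpose_sum]
  rw [← Finset.sum_range_reflect (fun i => M ^ i * (Kᵀ * M ^ (k - 1 - i))) k]
  refine Finset.sum_congr rfl fun j hj => ?_
  have hjk : j < k := Finset.mem_range.mp hj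
  have h1 : k - 1 - (k - 1 - j) = j := by omega
  rw [h1]
  rw [Matrix.transpose_mul, Matrix.transpose_mul, ← Matrix.transpose_pow,
    ← Matrix.transpose_pow, Matrix.transpose_transpose, Matrix.transpose_transpose]
  rw [mul_assoc]

lemma trace_D_comm (M L X : Matrix (Fin n) (Fin n) ℝ) :
    (L * D M X).trace = (D M L * X).trace := by
  have h1 := (D_hasSum_apply M X).mapL (traceMulLeftCLM L)
  have h2 := (D_hasSum_apply M L).mapL (traceMulRightCLM X)
  have hterm : (fun k : ℕ => traceMulLeftCLM L ((k.factorial : ℝ)⁻¹ • P M k X))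
      = fun k : ℕ => traceMulRightCLM X ((k.factorial : ℝ)⁻¹ • P M k L) := by
    funext k
    rw [_root_.map_smul, _root_.map_smul, traceMulLeftCLM_apply, traceMulRightCLM_apply]
    rw [P_trace_comm]
  rw [hterm] at h1
  have := h1.unique h2
  simpa using this

lemma D_transpose (M K : Matrix (Fin n) (Fin n) ℝ) :
    (D Mᵀ K)ᵀ = D M Kᵀ := by
  have h1 := (D_hasSum_apply Mᵀ K).mapL transposeCLM
  have h2 := D_hasSum_apply M Kᵀ
  have hterm : (fun k : ℕ => transposeCLM ((k.factorial : ℝ)⁻¹ • P Mᵀ k K))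
      = fun k : ℕ => (k.factorial : ℝ)⁻¹ • P M k Kᵀ := by
    funext k
    rw [_root_.map_smul, transposeCLM_apply, P_transpose]
  rw [hterm] at h1
  simpa using h1.unique h2

end MatrixPart

end DLieTriv

/-- Gradient of the dynamic Lie trivialization `exp_B(A) = B · exp(B⁻¹ A)`: if `f` is
differentiable at `exp_B(A)` with Frobenius gradient `G`, then `f ∘ exp_B` is
differentiable at `A` with Frobenius gradient `(B⁻¹)ᵀ (d exp)_{(B⁻¹A)ᵀ}(Bᵀ G)`. -/
theorem grad_comp_dynamic_lie_trivialization {n : ℕ}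
    (B : Matrix (Fin n) (Fin n) ℝ) (hB : IsUnit B)
    (f : Matrix (Fin n) (Fin n) ℝ → ℝ)
    (A G : Matrix (Fin n) (Fin n) ℝ)
    (φ : Matrix (Fin n) (Fin n) ℝ →L[ℝ] ℝ)
    (hf : HasFDerivAt f φ (B * NormedSpace.exp (B⁻¹ * A)))
    (hφ : ∀ H, φ H = (Gᵀ * H).trace) :
    ∃ ψ : Matrix (Fin n) (Fin n) ℝ →L[ℝ] ℝ,
      HasFDerivAt (fun X => f (B * NormedSpace.exp (B⁻¹ * X))) ψ A ∧
        ∀ H, ψ H =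
          (((B⁻¹)ᵀ * fderiv ℝ (NormedSpace.exp) (B⁻¹ * A)ᵀ (Bᵀ * G))ᵀ * H).trace := by
  have hDexp : HasFDerivAt (NormedSpace.exp) (DLieTriv.D (B⁻¹ * A)) (B⁻¹ * A) :=
    DLieTriv.hasFDerivAt_exp (B⁻¹ * A)
  have hmulinv : HasFDerivAt (fun X : (Matrix (Fin n) (Fin n) ℝ) => B⁻¹ * X)
      (ContinuousLinearMap.mul ℝ (Matrix (Fin n) (Fin n) ℝ) B⁻¹) A :=
    (ContinuousLinearMap.mul ℝ (Matrix (Fin n) (Fin n) ℝ) B⁻¹).hasFDerivAt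
  have hexp2 : HasFDerivAt (fun X : (Matrix (Fin n) (Fin n) ℝ) => NormedSpace.exp (B⁻¹ * X))
      ((DLieTriv.D (B⁻¹ * A)).comp (ContinuousLinearMap.mul ℝ (Matrix (Fin n) (Fin n) ℝ) B⁻¹)) A :=
    hDexp.comp A hmulinv
  have hg : HasFDerivAt (fun X : (Matrix (Fin n) (Fin n) ℝ) => B * NormedSpace.exp (B⁻¹ * X))
      ((ContinuousLinearMap.mul ℝ (Matrix (Fin n) (Fin n) ℝ) B).comp
        ((DLieTriv.D (B⁻¹ * A)).comp (ContinuousLinearMap.mul ℝ (Matrix (Fin n) (Fin n) ℝ) B⁻¹))) A :=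
    (ContinuousLinearMap.mul ℝ (Matrix (Fin n) (Fin n) ℝ) B).hasFDerivAt.comp A hexp2
  refine ⟨φ.comp ((ContinuousLinearMap.mul ℝ (Matrix (Fin n) (Fin n) ℝ) B).comp
      ((DLieTriv.D (B⁻¹ * A)).comp (ContinuousLinearMap.mul ℝ (Matrix (Fin n) (Fin n) ℝ) B⁻¹))), hf.comp A hg, ?_⟩
  intro H
  have hD' : fderiv ℝ (NormedSpace.exp) ((B⁻¹ * A)ᵀ) = DLieTriv.D ((B⁻¹ * A)ᵀ) :=
    (DLieTriv.hasFDerivAt_exp ((B⁻¹ * A)ᵀ)).fderiv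
  show φ (B * DLieTriv.D (B⁻¹ * A) (B⁻¹ * H)) = _
  rw [hφ, hD']
  have ht : ((B⁻¹)ᵀ * DLieTriv.D ((B⁻¹ * A)ᵀ) (Bᵀ * G))ᵀ
      = DLieTriv.D (B⁻¹ * A) (Gᵀ * B) * B⁻¹ := by
    rw [Matrix.transpose_mul, Matrix.transpose_transpose, DLieTriv.D_transpose]
    congr 1
    rw [Matrix.transpose_mul, Matrix.transpose_transpose]
  show (Gᵀ * (B * DLieTriv.D (B⁻¹ * A) (B⁻¹ * H))).trace
    = (((B⁻¹)ᵀ * DLieTriv.D ((B⁻¹ * A)ᵀ) (Bᵀ * G))ᵀ * H).trace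
  rw [ht, mul_assoc (DLieTriv.D (B⁻¹ * A) (Gᵀ * B)) B⁻¹ H,
    ← DLieTriv.trace_D_comm (B⁻¹ * A) (Gᵀ * B) (B⁻¹ * H), mul_assoc]
end

section
/- For all n×n real matrices A and X, left multiplication by exp(A) commutes with the Fréchet derivative of the matrix exponential at −A: exp(A) · (d exp)_{−A}(X) = (d exp)_{−A}(exp(A) · X). -/
open Matrix

attribute [local instance] Matrix.linftyOpNormedRing Matrix.linftyOpNormedAlgebra

open NormedSpace Finset Nat

set_option linter.unusedSectionVars false

section Aux

variable {𝔸 : Type*} [NormedRing 𝔸] [NormedAlgebra ℝ 𝔸] [CompleteSpace 𝔸]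

/-- The `k`-th term of the derivative series of `exp` at `B`. -/
noncomputable def expDerivTerm (B X : 𝔸) (k : ℕ) : 𝔸 :=
  ∑ i ∈ Finset.range k, B ^ i * X * B ^ (k - 1 - i)

lemma norm_pow_mul_le (B C : 𝔸) (i : ℕ) : ‖B ^ i * C‖ ≤ ‖B‖ ^ i * ‖C‖ := by
  induction i with
  | zero => simp
  | succ m ih =>
    have h1 : B ^ (m + 1) * C = B * (B ^ m * C) := by rw [pow_succ' B m, mul_assoc]
    calc ‖B ^ (m + 1) * C‖ = ‖B * (B ^ m * C)‖ := by rw [h1]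
      _ ≤ ‖B‖ * ‖B ^ m * C‖ := norm_mul_le _ _
      _ ≤ ‖B‖ * (‖B‖ ^ m * ‖C‖) := mul_le_mul_of_nonneg_left ih (norm_nonneg _)
      _ = ‖B‖ ^ (m + 1) * ‖C‖ := by ring

lemma norm_mul_pow_le (B C : 𝔸) (j : ℕ) : ‖C * B ^ j‖ ≤ ‖C‖ * ‖B‖ ^ j := by
  induction j with
  | zero => simp
  | succ m ih =>
    have h1 : C * B ^ (m + 1) = (C * B ^ m) * B := by rw [pow_succ, mul_assoc]
    calc ‖C * B ^ (m + 1)‖ = ‖(C * B ^ m) * B‖ := by rw [h1]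
      _ ≤ ‖C * B ^ m‖ * ‖B‖ := norm_mul_le _ _
      _ ≤ (‖C‖ * ‖B‖ ^ m) * ‖B‖ := mul_le_mul_of_nonneg_right ih (norm_nonneg _)
      _ = ‖C‖ * ‖B‖ ^ (m + 1) := by ring

lemma norm_expDerivTerm_le (B X : 𝔸) (k : ℕ) :
    ‖expDerivTerm B X k‖ ≤ (k : ℝ) * ‖B‖ ^ (k - 1) * ‖X‖ := by
  calc ‖expDerivTerm B X k‖ ≤ ∑ i ∈ Finset.range k, ‖B ^ i * X * B ^ (k - 1 - i)‖ :=
        norm_sum_le _ _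
    _ ≤ ∑ i ∈ Finset.range k, ‖B‖ ^ (k - 1) * ‖X‖ := by
        refine Finset.sum_le_sum fun i hi => ?_
        have hik : i < k := Finset.mem_range.mp hi
        calc ‖B ^ i * X * B ^ (k - 1 - i)‖ ≤ ‖B ^ i * X‖ * ‖B‖ ^ (k - 1 - i) :=
              norm_mul_pow_le _ _ _
          _ ≤ ‖B‖ ^ i * ‖X‖ * ‖B‖ ^ (k - 1 - i) :=
              mul_le_mul_of_nonneg_right (norm_pow_mul_le _ _ _)
                (pow_nonneg (norm_nonneg _) _)
          _ = ‖B‖ ^ (k - 1) * ‖X‖ := by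
              rw [mul_right_comm, ← pow_add, show i + (k - 1 - i) = k - 1 from by omega]
    _ = (k : ℝ) * ‖B‖ ^ (k - 1) * ‖X‖ := by
        rw [Finset.sum_const, Finset.card_range, nsmul_eq_mul]; ring

lemma expDerivTerm_succ (B X : 𝔸) (k : ℕ) :
    expDerivTerm B X (k + 1) = expDerivTerm B X k * B + B ^ k * X := by
  rw [expDerivTerm, expDerivTerm, Finset.sum_range_succ]
  congr 1
  · rw [Finset.sum_mul]
    refine Finset.sum_congr rfl fun i hi => ?_
    have hik : i < k := Finset.mem_range.mp hi
    rw [show k + 1 - 1 - i = (k - 1 - i) + 1 from by omega, pow_succ, ← mul_assoc]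
  · rw [show k + 1 - 1 - k = 0 from by omega, pow_zero, mul_one]

lemma norm_remainder_le (B X : 𝔸) (k : ℕ) :
    ‖(B + X) ^ k - B ^ k - expDerivTerm B X k‖ ≤
      (‖B‖ + ‖X‖) ^ k - ‖B‖ ^ k - (k : ℝ) * ‖B‖ ^ (k - 1) * ‖X‖ := by
  induction k with
  | zero => simp [expDerivTerm]
  | succ k ih =>
    have hrec : (B + X) ^ (k + 1) - B ^ (k + 1) - expDerivTerm B X (k + 1) =
        expDerivTerm B X k * X + ((B + X) ^ k - B ^ k - expDerivTerm B X k) * (B + X) := by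
      rw [expDerivTerm_succ, pow_succ, pow_succ]
      noncomm_ring
    have hreal : (‖B‖ + ‖X‖) ^ (k + 1) - ‖B‖ ^ (k + 1) -
        ((k + 1 : ℕ) : ℝ) * ‖B‖ ^ (k + 1 - 1) * ‖X‖ =
        ((k : ℝ) * ‖B‖ ^ (k - 1) * ‖X‖) * ‖X‖ +
          ((‖B‖ + ‖X‖) ^ k - ‖B‖ ^ k - (k : ℝ) * ‖B‖ ^ (k - 1) * ‖X‖) * (‖B‖ + ‖X‖) := by
      rcases k with _ | m
      · norm_num
      · simp only [Nat.add_sub_cancel]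
        push_cast
        ring
    rw [hrec, hreal]
    have h1 : ‖expDerivTerm B X k * X‖ ≤ ((k : ℝ) * ‖B‖ ^ (k - 1) * ‖X‖) * ‖X‖ :=
      le_trans (norm_mul_le _ _)
        (mul_le_mul_of_nonneg_right (norm_expDerivTerm_le B X k) (norm_nonneg _))
    have h2 : ‖((B + X) ^ k - B ^ k - expDerivTerm B X k) * (B + X)‖ ≤
        ((‖B‖ + ‖X‖) ^ k - ‖B‖ ^ k - (k : ℝ) * ‖B‖ ^ (k - 1) * ‖X‖) * (‖B‖ + ‖X‖) := by
      refine le_trans (norm_mul_le _ _) (mul_le_mul ih (norm_add_le _ _) (norm_nonneg _) ?_)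
      exact le_trans (norm_nonneg _) ih
    exact le_trans (norm_add_le _ _) (add_le_add h1 h2)

lemma coeff_succ_eq (b : ℝ) (k : ℕ) :
    ((k + 1 : ℕ) : ℝ) * b ^ (k + 1 - 1) / (k + 1)! = b ^ k / k ! := by
  rw [Nat.add_sub_cancel, Nat.factorial_succ]
  have h0 : ((k ! : ℕ) : ℝ) ≠ 0 := Nat.cast_ne_zero.mpr k.factorial_ne_zero
  have h1 : ((k : ℝ) + 1) ≠ 0 := by positivity
  push_cast
  field_simp

lemma summable_coeff (b : ℝ) : Summable (fun k : ℕ => (k : ℝ) * b ^ (k - 1) / k !) := by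
  have h : Summable (fun k : ℕ => ((k + 1 : ℕ) : ℝ) * b ^ (k + 1 - 1) / (k + 1)!) :=
    (Real.summable_pow_div_factorial b).congr fun k => (coeff_succ_eq b k).symm
  exact (summable_nat_add_iff 1).mp h

lemma summable_expDerivTerm (B X : 𝔸) :
    Summable (fun k : ℕ => ((k)! : ℝ)⁻¹ • expDerivTerm B X k) := by
  refine Summable.of_norm_bounded ((summable_coeff ‖B‖).mul_right ‖X‖) fun k => ?_
  rw [norm_smul]
  have h0 : (0 : ℝ) ≤ ((k)! : ℝ)⁻¹ := by positivity
  calc ‖((k)! : ℝ)⁻¹‖ * ‖expDerivTerm B X k‖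
      ≤ ((k)! : ℝ)⁻¹ * ((k : ℝ) * ‖B‖ ^ (k - 1) * ‖X‖) := by
        rw [Real.norm_eq_abs, abs_of_nonneg h0]
        exact mul_le_mul_of_nonneg_left (norm_expDerivTerm_le B X k) h0
    _ = (k : ℝ) * ‖B‖ ^ (k - 1) / (k)! * ‖X‖ := by field_simp; try ring

/-- The Fréchet derivative of `exp` at `B`, as a continuous linear map. -/
noncomputable def expDerivCLM (B : 𝔸) : 𝔸 →L[ℝ] 𝔸 :=
  LinearMap.mkContinuous
    { toFun := fun X => ∑' k : ℕ, ((k)! : ℝ)⁻¹ • expDerivTerm B X k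
      map_add' := fun X Y => by
        have hterm : ∀ k : ℕ, ((k)! : ℝ)⁻¹ • expDerivTerm B (X + Y) k =
            ((k)! : ℝ)⁻¹ • expDerivTerm B X k + ((k)! : ℝ)⁻¹ • expDerivTerm B Y k := by
          intro k
          rw [← smul_add]
          congr 1
          simp [expDerivTerm, mul_add, add_mul, Finset.sum_add_distrib]
        simp only [hterm]
        exact Summable.tsum_add (summable_expDerivTerm B X) (summable_expDerivTerm B Y)
      map_smul' := fun c X => by
        have hterm : ∀ k : ℕ, ((k)! : ℝ)⁻¹ • expDerivTerm B (c • X) k =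
            c • (((k)! : ℝ)⁻¹ • expDerivTerm B X k) := by
          intro k
          rw [smul_comm]
          congr 1
          simp [expDerivTerm, mul_smul_comm, smul_mul_assoc, Finset.smul_sum]
        simp only [hterm, RingHom.id_apply]
        exact Summable.tsum_const_smul c (summable_expDerivTerm B X) }
    (∑' k : ℕ, (k : ℝ) * ‖B‖ ^ (k - 1) / (k)!)
    (fun X => by
      refine tsum_of_norm_bounded ((summable_coeff ‖B‖).hasSum.mul_right ‖X‖) fun k => ?_
      rw [norm_smul]
      have h0 : (0 : ℝ) ≤ ((k)! : ℝ)⁻¹ := by positivity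
      calc ‖((k)! : ℝ)⁻¹‖ * ‖expDerivTerm B X k‖
          ≤ ((k)! : ℝ)⁻¹ * ((k : ℝ) * ‖B‖ ^ (k - 1) * ‖X‖) := by
            rw [Real.norm_eq_abs, abs_of_nonneg h0]
            exact mul_le_mul_of_nonneg_left (norm_expDerivTerm_le B X k) h0
        _ = (k : ℝ) * ‖B‖ ^ (k - 1) / (k)! * ‖X‖ := by field_simp; try ring)

@[simp] lemma expDerivCLM_apply (B X : 𝔸) :
    expDerivCLM B X = ∑' k : ℕ, ((k)! : ℝ)⁻¹ • expDerivTerm B X k := rfl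

lemma key_estimate (B X : 𝔸) (hX : ‖X‖ ≤ 1) :
    ‖exp (B + X) - exp B - expDerivCLM B X‖ ≤ (Real.exp ‖B‖ * (3 / 4)) * ‖X‖ ^ 2 := by
  set b := ‖B‖ with hb
  set x := ‖X‖ with hx
  have hx0 : 0 ≤ x := norm_nonneg _
  have hsum1 : Summable (fun k : ℕ => ((k)! : ℝ)⁻¹ • (B + X) ^ k) := expSeries_summable' (B + X)
  have hsum2 : Summable (fun k : ℕ => ((k)! : ℝ)⁻¹ • B ^ k) := expSeries_summable' B
  have hsum3 := summable_expDerivTerm B X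
  have hrem : exp (B + X) - exp B - expDerivCLM B X =
      ∑' k : ℕ, ((k)! : ℝ)⁻¹ • ((B + X) ^ k - B ^ k - expDerivTerm B X k) := by
    rw [exp_eq_tsum ℝ, expDerivCLM_apply]
    rw [← Summable.tsum_sub hsum1 hsum2, ← Summable.tsum_sub (hsum1.sub hsum2) hsum3]
    exact tsum_congr fun k => by rw [smul_sub, smul_sub]
  have ekey : ∀ y : ℝ, HasSum (fun k : ℕ => ((k)! : ℝ)⁻¹ * y ^ k) (Real.exp y) := by
    intro y
    have h := (expSeries_summable' (𝕂 := ℝ) y).hasSum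
    have h2 : (∑' n : ℕ, ((n)! : ℝ)⁻¹ • y ^ n) = Real.exp y := by
      rw [Real.exp_eq_exp_ℝ, exp_eq_tsum ℝ]
    rw [h2] at h
    simpa [smul_eq_mul] using h
  have e1 := ekey (b + x)
  have e2 := ekey b
  have e3 : HasSum (fun k : ℕ => ((k)! : ℝ)⁻¹ * ((k : ℝ) * b ^ (k - 1) * x))
      (Real.exp b * x) := by
    set f : ℕ → ℝ := fun k => ((k)! : ℝ)⁻¹ * ((k : ℝ) * b ^ (k - 1) * x) with hf
    have h01 : ∀ n : ℕ, f (n + 1) = ((n)! : ℝ)⁻¹ * b ^ n * x := by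
      intro n
      simp only [hf]
      rw [Nat.add_sub_cancel, Nat.factorial_succ]
      have h0 : (((n)! : ℕ) : ℝ) ≠ 0 := Nat.cast_ne_zero.mpr n.factorial_ne_zero
      have h1 : ((n : ℝ) + 1) ≠ 0 := by positivity
      push_cast
      field_simp
    have e3' : HasSum (fun n : ℕ => f (n + 1)) (Real.exp b * x) := by
      simp only [h01]
      exact e2.mul_right x
    have h := (hasSum_nat_add_iff 1).mp e3'
    simpa [hf] using h
  have hg : HasSum
      (fun k : ℕ => ((k)! : ℝ)⁻¹ * ((b + x) ^ k - b ^ k - (k : ℝ) * b ^ (k - 1) * x))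
      (Real.exp (b + x) - Real.exp b - Real.exp b * x) := by
    have h := (e1.sub e2).sub e3
    have hfun : (fun k : ℕ => ((k)! : ℝ)⁻¹ * ((b + x) ^ k - b ^ k - (k : ℝ) * b ^ (k - 1) * x)) =
        fun k : ℕ => ((k)! : ℝ)⁻¹ * (b + x) ^ k - ((k)! : ℝ)⁻¹ * b ^ k -
          ((k)! : ℝ)⁻¹ * ((k : ℝ) * b ^ (k - 1) * x) := by
      funext k; ring
    rw [hfun]
    exact h
  rw [hrem]
  have hbound : ∀ k : ℕ, ‖((k)! : ℝ)⁻¹ • ((B + X) ^ k - B ^ k - expDerivTerm B X k)‖ ≤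
      ((k)! : ℝ)⁻¹ * ((b + x) ^ k - b ^ k - (k : ℝ) * b ^ (k - 1) * x) := by
    intro k
    rw [norm_smul]
    have h0 : (0 : ℝ) ≤ ((k)! : ℝ)⁻¹ := by positivity
    rw [Real.norm_eq_abs, abs_of_nonneg h0]
    exact mul_le_mul_of_nonneg_left (norm_remainder_le B X k) h0
  refine le_trans (tsum_of_norm_bounded hg hbound) ?_
  have habs : |x| ≤ 1 := by rwa [abs_of_nonneg hx0]
  have hb2 := Real.exp_bound habs (by norm_num : 0 < 2)
  have hsum : ∑ m ∈ Finset.range 2, x ^ m / (m)! = 1 + x := by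
    simp [Finset.sum_range_succ, Nat.factorial]
  rw [hsum] at hb2
  have hx2 : Real.exp x - (1 + x) ≤ x ^ 2 * (3 / 4) := by
    refine (abs_le.mp hb2).2.trans_eq ?_
    rw [sq_abs]
    norm_num [Nat.factorial]
  have hexp0 : (0 : ℝ) < Real.exp b := Real.exp_pos b
  calc Real.exp (b + x) - Real.exp b - Real.exp b * x
      = Real.exp b * (Real.exp x - (1 + x)) := by rw [Real.exp_add]; ring
    _ ≤ Real.exp b * (x ^ 2 * (3 / 4)) := mul_le_mul_of_nonneg_left hx2 hexp0.le
    _ = (Real.exp b * (3 / 4)) * x ^ 2 := by ring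

theorem hasFDerivAt_exp'' (B : 𝔸) : HasFDerivAt (exp) (expDerivCLM B) B := by
  rw [hasFDerivAt_iff_isLittleO_nhds_zero]
  have hO : (fun X : 𝔸 => exp (B + X) - exp B - expDerivCLM B X) =O[nhds 0]
      fun X : 𝔸 => ‖X‖ ^ 2 := by
    rw [Asymptotics.isBigO_iff]
    refine ⟨Real.exp ‖B‖ * (3 / 4), ?_⟩
    have hball : Metric.closedBall (0 : 𝔸) 1 ∈ nhds (0 : 𝔸) :=
      Metric.closedBall_mem_nhds 0 one_pos
    filter_upwards [hball] with X hX
    have hX1 : ‖X‖ ≤ 1 := by simpa using hX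
    calc ‖exp (B + X) - exp B - expDerivCLM B X‖
        ≤ (Real.exp ‖B‖ * (3 / 4)) * ‖X‖ ^ 2 := key_estimate B X hX1
      _ = Real.exp ‖B‖ * (3 / 4) * ‖(‖X‖ ^ 2)‖ := by
          rw [Real.norm_eq_abs, abs_of_nonneg (by positivity)]
  exact hO.trans_isLittleO (Asymptotics.isLittleO_norm_pow_id (by norm_num))

end Aux

/-- Left multiplication by `exp A` commutes with the Fréchet derivative of the matrix
exponential at `-A`. -/
theorem exp_mul_comm_fderiv_exp_neg {n : ℕ} (A X : Matrix (Fin n) (Fin n) ℝ) :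
    NormedSpace.exp A * fderiv ℝ (NormedSpace.exp) (-A) X =
      fderiv ℝ (NormedSpace.exp) (-A) (NormedSpace.exp A * X) := by
  rw [show fderiv ℝ NormedSpace.exp (-A) = expDerivCLM (-A) from (hasFDerivAt_exp'' (-A)).fderiv]
  show NormedSpace.exp A * expDerivCLM (-A) X = expDerivCLM (-A) (NormedSpace.exp A * X)
  rw [expDerivCLM_apply, expDerivCLM_apply]
  rw [← (summable_expDerivTerm (-A) X).tsum_mul_left (NormedSpace.exp A)]
  refine tsum_congr fun k => ?_
  rw [mul_smul_comm]
  congr 1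
  rw [expDerivTerm, expDerivTerm, Finset.mul_sum]
  refine Finset.sum_congr rfl fun i _ => ?_
  have hc : Commute (NormedSpace.exp A) ((-A) ^ i) :=
    (((Commute.refl A).neg_right).exp_left).pow_right i
  rw [← mul_assoc, ← mul_assoc, hc.eq, mul_assoc ((-A) ^ i)]
end

section
/- The matrix exponential is surjective onto the complex general linear group: for every invertible n×n complex matrix B there exists an n×n complex matrix A with exp(A) = B. -/
open NormedSpace Finset Polynomial

lemma key_unipotent {A : Type*} [NormedCommRing A] [NormedAlgebra ℂ A] [CompleteSpace A]
    (m : A) (N : ℕ) (hm : m ^ N = 0) :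
    exp (∑ j ∈ Finset.range N, (((-1 : ℝ) ^ j / (j + 1)) • m ^ (j + 1))) = 1 + m := by
  classical
  set l : ℝ → A := fun t => ∑ j ∈ range N, (((-1:ℝ)^j * t^(j+1) / (j+1))) • m ^ (j+1) with hl
  set d : ℝ → A := fun t => ∑ j ∈ range N, ((-t)^j) • m ^ (j+1) with hd
  have hnil : ∀ t : ℝ, IsUnit (1 + t • m) := fun t =>
    IsNilpotent.isUnit_one_add ⟨N, by rw [_root_.smul_pow, hm, smul_zero]⟩
  -- derivative of l
  have hld : ∀ t : ℝ, HasDerivAt l (d t) t := by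
    intro t
    apply HasDerivAt.fun_sum
    intro j _
    have h1 : HasDerivAt (fun t : ℝ => ((-1:ℝ)^j / (j+1)) * t^(j+1))
        (((-1:ℝ)^j / (j+1)) * ((j+1) * t ^ j)) t := by
      simpa using ((hasDerivAt_pow (j+1) t).const_mul ((-1:ℝ)^j / (j+1)))
    have h2 := h1.smul_const (m ^ (j+1))
    convert h2 using 2 with t
    · rw [mul_div_assoc]; ring
    · have : ((j:ℝ)+1) ≠ 0 := by positivity
      field_simp
      rw [neg_pow]
  -- key algebraic identity
  have hdt : ∀ t : ℝ, d t * (1 + t • m) = m := by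
    intro t
    have step : ∀ j : ℕ, ((-t)^j • m^(j+1)) * (1 + t • m)
        = ((-t)^j • m^(j+1)) - ((-t)^(j+1) • m^(j+2)) := by
      intro j
      rw [mul_add, mul_one, mul_smul_comm, smul_mul_assoc, smul_smul, ← pow_succ,
        pow_succ (-t) j]
      rw [sub_eq_add_neg, ← neg_smul]
      congr 2
      ring
    calc d t * (1 + t • m)
        = ∑ j ∈ range N, (((-t)^j • m^(j+1)) - ((-t)^(j+1) • m^(j+2))) := by
          rw [hd, Finset.sum_mul]; exact Finset.sum_congr rfl fun j _ => step j
      _ = (-t)^0 • m^(0+1) - (-t)^N • m^(N+1) :=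
          Finset.sum_range_sub' (fun j => (-t)^j • m^(j+1)) N
      _ = m := by simp [pow_succ, hm]
  -- the auxiliary function
  set F : ℝ → A := fun t => exp (l t) * Ring.inverse (1 + t • m) with hF
  have hFd : ∀ t : ℝ, HasDerivAt F 0 t := by
    intro t
    have hinner : HasDerivAt (fun t : ℝ => 1 + t • m) m t := by
      simpa using ((hasDerivAt_id t).smul_const m).const_add (1 : A)
    have hinv : HasDerivAt (fun t : ℝ => Ring.inverse (1 + t • m))
        (-(Ring.inverse (1 + t • m) * m * Ring.inverse (1 + t • m))) t := by
      obtain ⟨u, hu⟩ := hnil t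
      have h0 := hasFDerivAt_ringInverse (𝕜 := ℝ) u
      rw [hu] at h0
      have h := h0.comp_hasDerivAt t hinner
      simpa [← hu, Ring.inverse_unit, Function.comp_def] using h
    have hexpd : HasDerivAt (fun t => exp (l t)) (exp (l t) * d t) t := by
      have hexp : HasFDerivAt (exp) (exp (l t) • (1 : A →L[ℂ] A)) (l t) :=
        hasFDerivAt_exp_of_mem_ball (by simp [expSeries_radius_eq_top])
      have h := (hexp.restrictScalars ℝ).comp_hasDerivAt t (hld t)
      simpa [smul_eq_mul, Function.comp_def] using h
    have h := hexpd.mul hinv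
    convert h using 1
    · rfl
    have hdv : d t = m * Ring.inverse (1 + t • m) := by
      have h1 : (1 + t • m) * Ring.inverse (1 + t • m) = 1 := Ring.mul_inverse_cancel _ (hnil t)
      calc d t = d t * ((1 + t • m) * Ring.inverse (1 + t • m)) := by rw [h1, mul_one]
        _ = (d t * (1 + t • m)) * Ring.inverse (1 + t • m) := by rw [mul_assoc]
        _ = m * Ring.inverse (1 + t • m) := by rw [hdt t]
    rw [hdv]
    ring
  have hconst : F 1 = F 0 :=
    is_const_of_deriv_eq_zero (fun t => (hFd t).differentiableAt) (fun t => (hFd t).deriv) 1 0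
  have hF0 : F 0 = 1 := by
    have hl0 : l 0 = 0 := by simp [hl]
    simp [hF, hl0, exp_zero, Ring.inverse_one]
  have hF1 : exp (l 1) * Ring.inverse (1 + m) = 1 := by
    simpa [hF] using hconst.trans hF0
  have h1m : Ring.inverse (1 + m) * (1 + m) = 1 := by
    have := Ring.inverse_mul_cancel _ (hnil 1)
    simpa using this
  have hfinal : exp (l 1) = 1 + m := by
    calc exp (l 1) = exp (l 1) * (Ring.inverse (1 + m) * (1 + m)) := by rw [h1m, mul_one]
      _ = (exp (l 1) * Ring.inverse (1 + m)) * (1 + m) := by rw [mul_assoc]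
      _ = 1 + m := by rw [hF1, one_mul]
  have : l 1 = ∑ j ∈ Finset.range N, (((-1 : ℝ) ^ j / (j + 1)) • m ^ (j + 1)) := by
    simp [hl]
  rwa [this] at hfinal
lemma nilpotent_log {n : ℕ} (M : Matrix (Fin n) (Fin n) ℂ) (hM : IsNilpotent M) :
    ∃ Y : Matrix (Fin n) (Fin n) ℂ,
      exp Y = 1 + M ∧ ∀ x, Commute x M → Commute x Y := by
  classical
  letI : SeminormedRing (Matrix (Fin n) (Fin n) ℂ) := Matrix.linftyOpSemiNormedRing
  letI : NormedRing (Matrix (Fin n) (Fin n) ℂ) := Matrix.linftyOpNormedRing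
  letI : NormedAlgebra ℂ (Matrix (Fin n) (Fin n) ℂ) := Matrix.linftyOpNormedAlgebra
  obtain ⟨N, hN⟩ := hM
  set S := Algebra.adjoin ℂ {M} with hS
  letI : NormedCommRing ↥S :=
    { (inferInstance : NormedRing ↥S) with
      mul_comm := fun a b => Subtype.ext <| by
        have := Algebra.commute_of_mem_adjoin_of_forall_mem_commute (a := (a : Matrix (Fin n) (Fin n) ℂ)) b.2
          (fun c hc => by
            rw [Set.mem_singleton_iff] at hc
            subst hc
            exact (Algebra.commute_of_mem_adjoin_self a.2).symm)
        exact this }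
  haveI : FiniteDimensional ℂ ↥S := inferInstance
  haveI : CompleteSpace ↥S := @FiniteDimensional.complete ℂ ↥S _ _ _ _ _ SeminormedAddCommGroup.to_isUniformAddGroup _ _ _
  set m : ↥S := ⟨M, Algebra.self_mem_adjoin_singleton ℂ M⟩ with hmdef
  have hm : m ^ N = 0 := Subtype.ext (by simpa [hmdef] using hN)
  have key := key_unipotent m N hm
  letI : NormedAlgebra ℚ ↥S := NormedAlgebra.restrictScalars ℚ ℂ ↥S
  have hval := map_exp (S.val) continuous_subtype_val
      (∑ j ∈ Finset.range N, (((-1 : ℝ) ^ j / (j + 1)) • m ^ (j + 1)))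
  rw [key] at hval
  refine ⟨∑ j ∈ Finset.range N, (((-1 : ℝ) ^ j / (j + 1)) • M ^ (j + 1)), ?_, ?_⟩
  · have hcoe : (S.val) (∑ j ∈ Finset.range N, (((-1 : ℝ) ^ j / (j + 1)) • m ^ (j + 1)))
        = ∑ j ∈ Finset.range N, (((-1 : ℝ) ^ j / (j + 1)) • M ^ (j + 1)) := by
      push_cast [map_sum]
      rfl
    rw [← hcoe]
    exact hval.symm
  · intro x hx
    refine Commute.sum_right _ _ _ fun j _ => ?_
    exact (hx.pow_right (j + 1)).smul_right _
lemma exp_mulVec {n : ℕ} (A : Matrix (Fin n) (Fin n) ℂ) (v : Fin n → ℂ) (c : ℂ)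
    (h : A.mulVec v = c • v) :
    (exp A).mulVec v = Complex.exp c • v := by
  letI : SeminormedRing (Matrix (Fin n) (Fin n) ℂ) := Matrix.linftyOpSemiNormedRing
  letI : NormedRing (Matrix (Fin n) (Fin n) ℂ) := Matrix.linftyOpNormedRing
  letI : NormedAlgebra ℂ (Matrix (Fin n) (Fin n) ℂ) := Matrix.linftyOpNormedAlgebra
  have hpow : ∀ k : ℕ, (A ^ k).mulVec v = c ^ k • v := by
    intro k
    induction k with
    | zero => simp
    | succ k ih =>
      rw [pow_succ', ← Matrix.mulVec_mulVec, ih, Matrix.mulVec_smul, h, smul_smul, ← pow_succ]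
  let T : Matrix (Fin n) (Fin n) ℂ →ₗ[ℂ] (Fin n → ℂ) :=
    { toFun := fun B => B.mulVec v
      map_add' := fun B C => Matrix.add_mulVec B C v
      map_smul' := fun r B => Matrix.smul_mulVec r B v }
  have hT : (exp A).mulVec v = T.toContinuousLinearMap (exp A) := rfl
  rw [hT, exp_eq_tsum ℂ]
  rw [T.toContinuousLinearMap.map_tsum (expSeries_summable' (𝕂 := ℂ) A)]
  have hfac : ∀ k : ℕ, ((Nat.factorial k : ℂ))⁻¹ • A ^ k = ((Nat.factorial k : ℂ))⁻¹ • A ^ k := fun _ => rfl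
  have h1 : ∀ k : ℕ, T.toContinuousLinearMap (((Nat.factorial k : ℂ))⁻¹ • A ^ k) = (((Nat.factorial k : ℂ))⁻¹ * c ^ k) • v := by
    intro k
    show ((((Nat.factorial k : ℂ))⁻¹ • A ^ k)).mulVec v = _
    rw [Matrix.smul_mulVec, hpow, smul_smul]
  simp_rw [h1]
  have hsum : Summable fun k : ℕ => ((Nat.factorial k : ℂ))⁻¹ * c ^ k := by
    simpa [smul_eq_mul] using expSeries_summable' (𝕂 := ℂ) (𝔸 := ℂ) c
  rw [hsum.tsum_smul_const]
  congr 1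
  rw [Complex.exp_eq_exp_ℂ, exp_eq_tsum ℂ]
  simp [smul_eq_mul]
lemma semisimple_log {n : ℕ} (S : Matrix (Fin n) (Fin n) ℂ)
    (hss : Module.End.IsSemisimple (Matrix.toLinAlgEquiv' S : Module.End ℂ (Fin n → ℂ)))
    (hSu : IsUnit S) :
    ∃ X : Matrix (Fin n) (Fin n) ℂ,
      exp X = S ∧ ∀ x, Commute x S → Commute x X := by
  classical
  set f : Module.End ℂ (Fin n → ℂ) := Matrix.toLinAlgEquiv' S with hf
  have hfu : IsUnit f := hSu.map (Matrix.toLinAlgEquiv' : _ ≃ₐ[ℂ] _)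
  have finj : Function.Injective f := ((Module.End.isUnit_iff f).mp hfu).injective
  set nodes : Finset ℂ := (minpoly ℂ f).roots.toFinset with hnodes
  set p : ℂ[X] := Lagrange.interpolate nodes id Complex.log with hp
  refine ⟨Polynomial.aeval S p, ?_, ?_⟩
  · -- exp (aeval S p) = S
    -- eigenspaces span
    have htop : ⨆ μ : ℂ, f.eigenspace μ = ⊤ := by
      have h1 := Module.End.iSup_maxGenEigenspace_eq_top f
      calc ⨆ μ : ℂ, f.eigenspace μ
          = ⨆ μ : ℂ, f.maxGenEigenspace μ := by
            refine iSup_congr fun μ => ?_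
            exact (hss.isFinitelySemisimple.maxGenEigenspace_eq_eigenspace μ).symm
        _ = ⊤ := h1
    have hmain : ∀ v : Fin n → ℂ, (exp (Polynomial.aeval S p)).mulVec v = S.mulVec v := by
      intro v
      have hv : v ∈ ⨆ μ : ℂ, f.eigenspace μ := htop ▸ Submodule.mem_top
      refine Submodule.iSup_induction (motive := fun v => (exp (Polynomial.aeval S p)).mulVec v = S.mulVec v)
        (fun μ : ℂ => f.eigenspace μ) hv (fun μ w hw => ?_) (by simp)
        (fun x y hx hy => by rw [Matrix.mulVec_add, Matrix.mulVec_add, hx, hy])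
      · show (exp (Polynomial.aeval S p)).mulVec w = S.mulVec w
        by_cases hw0 : w = 0
        · simp [hw0]
        · have hev : f.HasEigenvector μ w := ⟨hw, hw0⟩
          have heval : f w = μ • w := Module.End.mem_eigenspace_iff.mp hw
          have hμ0 : μ ≠ 0 := by
            rintro rfl
            apply hw0
            apply finj
            simpa using heval
          have hμnode : μ ∈ nodes := by
            rw [hnodes, Multiset.mem_toFinset]
            refine Polynomial.mem_roots'.mpr ⟨minpoly.ne_zero_of_finite ℂ f, ?_⟩
            exact Module.End.hasEigenvalue_iff_isRoot.mp (Module.End.hasEigenvalue_of_hasEigenvector hev)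
          have hpval : Polynomial.eval μ p = Complex.log μ := by
            have := Lagrange.eval_interpolate_at_node (v := id) (r := Complex.log)
              (Set.injOn_id _) hμnode
            simpa [hp] using this
          have haev : (Polynomial.aeval S p).mulVec w = Complex.log μ • w := by
            have h1 : Polynomial.aeval f p w = Polynomial.eval μ p • w :=
              Module.End.aeval_apply_of_hasEigenvector hev
            have h2 : Polynomial.aeval f p = Matrix.toLinAlgEquiv' (Polynomial.aeval S p) := by
              rw [hf, ← Polynomial.aeval_algHom_apply]
            rw [h2, Matrix.toLinAlgEquiv'_apply] at h1
            rw [h1, hpval]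
          rw [exp_mulVec _ _ _ haev, Complex.exp_log hμ0]
          have : S.mulVec w = f w := (Matrix.toLinAlgEquiv'_apply S w).symm
          rw [this, heval]
    apply Matrix.toLinAlgEquiv'.injective
    apply LinearMap.ext
    intro v
    simp only [Matrix.toLinAlgEquiv'_apply]
    exact hmain v
  · intro x hx
    exact Algebra.commute_of_mem_adjoin_singleton_of_commute
      (Polynomial.aeval_mem_adjoin_singleton ℂ S) hx

/-- The matrix exponential is surjective onto the complex general linear group: every
invertible complex matrix is the exponential of some matrix. -/
theorem matrix_exp_surjective_onto_GL {n : ℕ} (B : Matrix (Fin n) (Fin n) ℂ)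
    (hB : IsUnit B) :
    ∃ A : Matrix (Fin n) (Fin n) ℂ, NormedSpace.exp A = B := by
  classical
  set e : Matrix (Fin n) (Fin n) ℂ ≃ₐ[ℂ] Module.End ℂ (Fin n → ℂ) :=
    Matrix.toLinAlgEquiv' with he
  set f : Module.End ℂ (Fin n → ℂ) := e B with hf
  obtain ⟨nE, hnE, sE, hsE, hnil, hss, hsum⟩ :=
    Module.End.exists_isNilpotent_isSemisimple (f := f)
  set S : Matrix (Fin n) (Fin n) ℂ := e.symm sE with hSdef
  set N : Matrix (Fin n) (Fin n) ℂ := e.symm nE with hNdef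
  have heS : e S = sE := e.apply_symm_apply sE
  have heN : e N = nE := e.apply_symm_apply nE
  have hBNS : B = N + S := by
    apply e.injective
    rw [map_add, heS, heN, ← hf, hsum]
  -- commutation
  have hcomm : Commute sE nE := by
    refine Algebra.commute_of_mem_adjoin_of_forall_mem_commute hnE fun c hc => ?_
    rw [Set.mem_singleton_iff] at hc
    subst hc
    exact (Algebra.commute_of_mem_adjoin_self hsE).symm
  have hSN : Commute S N := by
    have := hcomm.map e.symm.toAlgHom.toRingHom
    simpa [← hSdef, ← hNdef] using this
  have hNnil : IsNilpotent N := by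
    obtain ⟨k, hk⟩ := hnil
    exact ⟨k, by rw [hNdef, ← map_pow, hk, map_zero]⟩
  -- injectivity of f
  have hfu : IsUnit f := hB.map e
  have hfinj : Function.Injective f := ((Module.End.isUnit_iff f).mp hfu).injective
  -- S is a unit
  have hsEinj : Function.Injective sE := by
    rw [injective_iff_map_eq_zero']
    intro w₀
    constructor
    swap
    · rintro rfl; exact map_zero sE
    intro hw₀mem
    by_contra hw₀
    obtain ⟨k, hk⟩ := hnil
    have hex : ∃ j, (nE ^ j) w₀ = 0 := ⟨k, by rw [hk]; rfl⟩
    set jf := Nat.find hex with hjf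
    have hjfspec : (nE ^ jf) w₀ = 0 := Nat.find_spec hex
    have hjfpos : 0 < jf := by
      rcases Nat.eq_zero_or_pos jf with h | h
      · exfalso; apply hw₀; have := hjfspec; rw [h, pow_zero] at this; simpa using this
      · exact h
    set w : Fin n → ℂ := (nE ^ (jf - 1)) w₀ with hw
    have hwne : w ≠ 0 := Nat.find_min hex (Nat.sub_lt hjfpos one_pos)
    have hnEw : nE w = 0 := by
      rw [hw, ← Module.End.mul_apply, ← pow_succ']
      rw [Nat.sub_add_cancel hjfpos]
      exact hjfspec
    have hsEw : sE w = 0 := by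
      have hc : Commute sE (nE ^ (jf - 1)) := hcomm.pow_right _
      rw [hw, ← Module.End.mul_apply, hc.eq, Module.End.mul_apply, hw₀mem, map_zero]
    have : f w = 0 := by rw [hsum, LinearMap.add_apply, hnEw, hsEw, add_zero]
    exact hwne (hfinj (by rw [this, map_zero]))
  have hsEu : IsUnit sE := by
    rw [Module.End.isUnit_iff]
    exact ⟨hsEinj, (LinearMap.injective_iff_surjective).mp hsEinj⟩
  have hSu : IsUnit S := hsEu.map e.symm
  -- semisimplicity transported
  have hss' : Module.End.IsSemisimple (Matrix.toLinAlgEquiv' S : Module.End ℂ (Fin n → ℂ)) := by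
    have : (Matrix.toLinAlgEquiv' S : Module.End ℂ (Fin n → ℂ)) = sE := heS
    rw [this]; exact hss
  obtain ⟨X, hX, hXcomm⟩ := semisimple_log S hss' hSu
  obtain ⟨uS, huS⟩ := hSu
  set M : Matrix (Fin n) (Fin n) ℂ := (↑uS⁻¹ : Matrix (Fin n) (Fin n) ℂ) * N with hMdef
  have hNu : Commute N (↑uS⁻¹ : Matrix (Fin n) (Fin n) ℂ) := by
    have h1 : Commute N (↑uS : Matrix (Fin n) (Fin n) ℂ) := by rw [huS]; exact hSN.symm
    exact h1.units_inv_right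
  have hMnil : IsNilpotent M := by
    exact (hNu.symm).isNilpotent_mul_left hNnil
  have hBSM : B = S * (1 + M) := by
    have h1 : S * (↑uS⁻¹ : Matrix (Fin n) (Fin n) ℂ) = 1 := by rw [← huS, Units.mul_inv]
    rw [mul_add, mul_one, hMdef, ← mul_assoc, h1, one_mul, hBNS, add_comm]
  obtain ⟨Y, hY, hYcomm⟩ := nilpotent_log M hMnil
  have hSX : Commute S X := hXcomm S (Commute.refl S)
  have hNX : Commute N X := hXcomm N hSN.symm
  have hXu : Commute X (↑uS⁻¹ : Matrix (Fin n) (Fin n) ℂ) := by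
    have h1 : Commute X (↑uS : Matrix (Fin n) (Fin n) ℂ) := by rw [huS]; exact hSX.symm
    exact h1.units_inv_right
  have hXM : Commute X M := hXu.mul_right hNX.symm
  have hXY : Commute X Y := hYcomm X hXM
  refine ⟨X + Y, ?_⟩
  rw [Matrix.exp_add_of_commute X Y hXY, hX, hY, ← hBSM]
end

section
/- Let B be a symmetric positive definite n×n real matrix with positive definite square root B^{1/2}. Then the map A ↦ B^{1/2} · exp(A) · B^{1/2} is a bijection from the set of symmetric n×n real matrices onto the set of symmetric positive definite n×n real matrices: for every symmetric A the matrix B^{1/2} exp(A) B^{1/2} is symmetric positive definite, and every symmetric positive definite matrix arises this way from a unique symmetric A. -/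
open Matrix

private lemma Matrix.PosDef.conj_of_isUnit {n : ℕ} {P Q : Matrix (Fin n) (Fin n) ℝ}
    (hP : P.PosDef) (hQ : IsUnit Q) : (Q * P * Qᴴ).PosDef := by
  refine Matrix.posDef_iff_dotProduct_mulVec.mpr
    ⟨Matrix.isHermitian_mul_mul_conjTranspose Q hP.isHermitian, fun x hx => ?_⟩
  have hQ' : IsUnit Qᴴ := by
    rw [Matrix.isUnit_iff_isUnit_det, Matrix.det_conjTranspose]
    simpa using (Q.isUnit_iff_isUnit_det.mp hQ)
  have hx' : Qᴴ *ᵥ x ≠ 0 := by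
    intro h
    exact hx (Matrix.mulVec_injective_iff_isUnit.mpr hQ' (by simpa using h))
  simpa only [star_mulVec, dotProduct_mulVec, vecMul_vecMul, ← Matrix.mul_assoc,
    conjTranspose_conjTranspose]
    using (Matrix.posDef_iff_dotProduct_mulVec.mp hP).2 hx'

private lemma Matrix.IsHermitian.posDef_of_eigenvalues_pos {n : ℕ}
    {A : Matrix (Fin n) (Fin n) ℝ} (hA : A.IsHermitian)
    (h : ∀ i, 0 < hA.eigenvalues i) : A.PosDef := by
  rw [hA.spectral_theorem]
  have hU : IsUnit (hA.eigenvectorUnitary : Matrix (Fin n) (Fin n) ℝ) :=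
    (Unitary.toUnits hA.eigenvectorUnitary).isUnit
  have hD : (Matrix.diagonal (RCLike.ofReal ∘ hA.eigenvalues) :
      Matrix (Fin n) (Fin n) ℝ).PosDef := by
    rw [Matrix.posDef_diagonal_iff]
    intro i
    simpa using h i
  rw [Unitary.conjStarAlgAut_apply, Matrix.star_eq_conjTranspose]
  exact hD.conj_of_isUnit hU

private lemma Matrix.IsHermitian.posDef_of_spectrum_pos {n : ℕ}
    {A : Matrix (Fin n) (Fin n) ℝ} (hA : A.IsHermitian)
    (h : ∀ x ∈ spectrum ℝ A, 0 < x) : A.PosDef :=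
  hA.posDef_of_eigenvalues_pos fun i => h _ (hA.eigenvalues_mem_spectrum_real i)

private lemma Matrix.PosDef.spectrum_pos {n : ℕ} {A : Matrix (Fin n) (Fin n) ℝ}
    (hA : A.PosDef) : ∀ x ∈ spectrum ℝ A, 0 < x := by
  intro x hx
  rw [hA.isHermitian.spectrum_real_eq_range_eigenvalues] at hx
  obtain ⟨i, rfl⟩ := hx
  exact hA.eigenvalues_pos i

private lemma Matrix.isSelfAdjoint_of_transpose_eq {n : ℕ} {A : Matrix (Fin n) (Fin n) ℝ}
    (h : Aᵀ = A) : _root_.IsSelfAdjoint A := by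
  rw [_root_.IsSelfAdjoint, Matrix.star_eq_conjTranspose]
  ext i j
  simp only [Matrix.conjTranspose_apply, star_trivial]
  exact congrFun (congrFun h i) j

private lemma Matrix.transpose_eq_of_isSelfAdjoint {n : ℕ} {A : Matrix (Fin n) (Fin n) ℝ}
    (h : _root_.IsSelfAdjoint A) : Aᵀ = A := by
  rw [_root_.IsSelfAdjoint, Matrix.star_eq_conjTranspose] at h
  ext i j
  have := congrFun (congrFun h i) j
  simpa [Matrix.conjTranspose_apply] using this

private lemma Matrix.exp_posDef_of_isSelfAdjoint {n : ℕ} {A : Matrix (Fin n) (Fin n) ℝ}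
    (hA : _root_.IsSelfAdjoint A) : (NormedSpace.exp A).PosDef := by
  letI : NormedRing (Matrix (Fin n) (Fin n) ℝ) := Matrix.instL2OpNormedRing
  letI : NormedAlgebra ℝ (Matrix (Fin n) (Fin n) ℝ) := Matrix.instL2OpNormedAlgebra
  have key : cfc Real.exp A = NormedSpace.exp A := CFC.real_exp_eq_normedSpace_exp hA
  rw [← key]
  have hherm : _root_.IsSelfAdjoint (cfc Real.exp A) := cfc_predicate Real.exp A
  refine Matrix.IsHermitian.posDef_of_spectrum_pos hherm ?_
  intro x hx
  rw [cfc_map_spectrum Real.exp A hA] at hx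
  obtain ⟨y, _, rfl⟩ := hx
  exact Real.exp_pos y

private noncomputable def matLog {n : ℕ} (A : Matrix (Fin n) (Fin n) ℝ) :
    Matrix (Fin n) (Fin n) ℝ := cfc Real.log A

private lemma matLog_isSelfAdjoint {n : ℕ} (A : Matrix (Fin n) (Fin n) ℝ) :
    _root_.IsSelfAdjoint (matLog A) := cfc_predicate Real.log A

private lemma Matrix.log_exp' {n : ℕ} {A : Matrix (Fin n) (Fin n) ℝ}
    (hA : _root_.IsSelfAdjoint A) : matLog (NormedSpace.exp A) = A := by
  letI : NormedRing (Matrix (Fin n) (Fin n) ℝ) := Matrix.instL2OpNormedRing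
  letI : NormedAlgebra ℝ (Matrix (Fin n) (Fin n) ℝ) := Matrix.instL2OpNormedAlgebra
  have h : matLog (NormedSpace.exp A) = CFC.log (NormedSpace.exp A) := rfl
  rw [h]
  exact CFC.log_exp A hA

private lemma Matrix.exp_log' {n : ℕ} {A : Matrix (Fin n) (Fin n) ℝ}
    (hA : A.PosDef) : NormedSpace.exp (matLog A) = A := by
  letI : NormedRing (Matrix (Fin n) (Fin n) ℝ) := Matrix.instL2OpNormedRing
  letI : NormedAlgebra ℝ (Matrix (Fin n) (Fin n) ℝ) := Matrix.instL2OpNormedAlgebra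
  have h : matLog A = CFC.log A := rfl
  rw [h]
  open scoped MatrixOrder in
  exact CFC.exp_log A hA.isStrictlyPositive

/-- For a symmetric positive definite `B` with positive definite square root `S = B^{1/2}`,
the map `A ↦ S · exp(A) · S` is a bijection from the symmetric matrices onto the symmetric
positive definite matrices. -/
theorem sqrt_exp_sqrt_bij_symmetric_posDef {n : ℕ}
    (B S : Matrix (Fin n) (Fin n) ℝ) (hB : B.PosDef) (hS : S.PosDef)
    (hSB : S * S = B) :
    (∀ A : Matrix (Fin n) (Fin n) ℝ, Aᵀ = A → (S * NormedSpace.exp A * S).PosDef) ∧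
      ∀ C : Matrix (Fin n) (Fin n) ℝ, C.PosDef →
        ∃! A : Matrix (Fin n) (Fin n) ℝ, Aᵀ = A ∧ S * NormedSpace.exp A * S = C := by
  have hSunit : IsUnit S := hS.isUnit
  have hSdet : IsUnit S.det := S.isUnit_iff_isUnit_det.mp hSunit
  have hSH : Sᴴ = S := hS.isHermitian
  have hconjS : ∀ {P : Matrix (Fin n) (Fin n) ℝ}, P.PosDef → (S * P * S).PosDef := by
    intro P hP
    have := hP.conj_of_isUnit hSunit
    rwa [hSH] at this
  constructor
  · intro A hA
    exact hconjS (Matrix.exp_posDef_of_isSelfAdjoint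
      (Matrix.isSelfAdjoint_of_transpose_eq hA))
  · intro C hC
    have hSinv : (S⁻¹).PosDef := hS.inv
    have hSinvH : (S⁻¹)ᴴ = S⁻¹ := hSinv.isHermitian
    have hSinvUnit : IsUnit S⁻¹ := hSinv.isUnit
    have hM : (S⁻¹ * C * S⁻¹).PosDef := by
      have := hC.conj_of_isUnit hSinvUnit
      rwa [hSinvH] at this
    set M := S⁻¹ * C * S⁻¹ with hMdef
    have hSM : S * M * S = C := by
      rw [hMdef]
      calc S * (S⁻¹ * C * S⁻¹) * S = (S * S⁻¹) * C * (S⁻¹ * S) := by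
            simp only [Matrix.mul_assoc]
          _ = C := by rw [Matrix.mul_nonsing_inv S hSdet, Matrix.nonsing_inv_mul S hSdet,
            Matrix.one_mul, Matrix.mul_one]
    refine ⟨matLog M, ⟨?_, ?_⟩, ?_⟩
    · exact Matrix.transpose_eq_of_isSelfAdjoint (matLog_isSelfAdjoint M)
    · rw [Matrix.exp_log' hM, hSM]
    · rintro A' ⟨hA'sym, hA'eq⟩
      have hsa' : _root_.IsSelfAdjoint A' := Matrix.isSelfAdjoint_of_transpose_eq hA'sym
      have hexp : NormedSpace.exp A' = M := by
        rw [hMdef]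
        calc NormedSpace.exp A'
            = (S⁻¹ * S) * NormedSpace.exp A' * (S * S⁻¹) := by
              rw [Matrix.nonsing_inv_mul S hSdet, Matrix.mul_nonsing_inv S hSdet,
                Matrix.one_mul, Matrix.mul_one]
          _ = S⁻¹ * (S * NormedSpace.exp A' * S) * S⁻¹ := by
              simp only [Matrix.mul_assoc]
          _ = S⁻¹ * C * S⁻¹ := by rw [hA'eq]
      rw [← Matrix.log_exp' hsa', hexp]
end
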